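/- arXiv:1203.4008 — 11 statements merged into one kernel-verified Lean document; each statement's English description precedes it below -/
import Mathlib

section
/- For every erasure probability ε with 0 < ε < 1, every integer N ≥ 1, and all integers K, K', T with 1 ≤ K < K' ≤ T, the decoding probability is strictly decreasing in the block size: P(K',T) < P(K,T). -/
/-- Single-receiver decoding probability: probability that one receiver obtains
`K` successful receptions within `T` slots over a binary erasure channel with
erasure probability `ε`.  (The sum over `Finset.Icc K T` is empty, i.e. `0`,
when `T < K`.) -/
noncomputable def Phat (ε : ℝ) (K T : ℕ) : ℝ :=
  ∑ τ ∈ Finset.Icc K T, ((τ - 1).choose (K - 1) : ℝ) * ε ^ (τ - K) * (1 - ε) ^ K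

lemma phat_step (ε : ℝ) (K T : ℕ) (hK : 1 ≤ K) :
    Phat ε K T = Phat ε (K+1) T + (T.choose K : ℝ) * ε ^ (T - K) * (1 - ε) ^ K := by
  obtain ⟨k, rfl⟩ : ∃ k, K = k + 1 := ⟨K - 1, by omega⟩
  clear hK
  induction T with
  | zero =>
      simp [Phat, Finset.Icc_eq_empty_of_lt, Nat.choose_eq_zero_of_lt]
  | succ T ih =>
      rcases lt_trichotomy (k + 1) (T + 1) with h | h | h
      · have h1 : k + 1 ≤ T + 1 := le_of_lt h
        have h2 : k + 2 ≤ T + 1 := h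
        rw [Phat, Phat, Finset.sum_Icc_succ_top h1, Finset.sum_Icc_succ_top h2]
        rw [show (∑ τ ∈ Finset.Icc (k+1) T, ((τ - 1).choose ((k+1) - 1) : ℝ) * ε ^ (τ - (k+1)) * (1 - ε) ^ (k+1)) = Phat ε (k+1) T from rfl,
            show (∑ τ ∈ Finset.Icc (k+2) T, ((τ - 1).choose ((k+2) - 1) : ℝ) * ε ^ (τ - (k+2)) * (1 - ε) ^ (k+2)) = Phat ε (k+2) T from rfl]
        rw [ih]
        have hTk : T + 1 - (k + 1) = (T - (k+1)) + 1 := by omega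
        have hTk2 : T + 1 - (k + 2) = T - (k + 1) := by omega
        have hc : ((T+1).choose (k+1) : ℝ) = (T.choose (k+1) : ℝ) + (T.choose k : ℝ) := by
          rw [Nat.choose_succ_succ']
          push_cast; ring
        simp only [Nat.add_sub_cancel, hTk, hTk2, hc]
        push_cast
        ring
      · -- k + 1 = T + 1
        have hk : k = T := by omega
        rw [Phat, Phat]
        rw [Finset.Icc_eq_empty_of_lt (by omega : T + 1 < k + 2)]
        rw [show Finset.Icc (k+1) (T+1) = {T+1} by rw [hk]; exact Finset.Icc_self _]
        simp [hk]
      · -- k + 1 > T + 1 : everything zero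
        rw [Phat, Phat]
        rw [Finset.Icc_eq_empty_of_lt (by omega : T + 1 < k + 1),
            Finset.Icc_eq_empty_of_lt (by omega : T + 1 < k + 2)]
        rw [Nat.choose_eq_zero_of_lt (by omega : T + 1 < k + 1)]
        simp

lemma phat_nonneg (ε : ℝ) (hε0 : 0 ≤ ε) (hε1 : ε ≤ 1) (K T : ℕ) : 0 ≤ Phat ε K T := by
  apply Finset.sum_nonneg
  intro τ _
  have : (0:ℝ) ≤ 1 - ε := by linarith
  positivity

lemma phat_anti (ε : ℝ) (hε0 : 0 ≤ ε) (hε1 : ε ≤ 1) (K K' T : ℕ) (hK : 1 ≤ K)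
    (h : K ≤ K') : Phat ε K' T ≤ Phat ε K T := by
  induction K' with
  | zero => omega
  | succ J ih =>
      rcases Nat.eq_or_lt_of_le h with h' | h'
      · rw [h']
      · have hJ : K ≤ J := by omega
        have h1 : 1 ≤ J := by omega
        calc Phat ε (J+1) T ≤ Phat ε J T := by
              rw [phat_step ε J T h1]
              have : (0:ℝ) ≤ (T.choose J : ℝ) * ε ^ (T - J) * (1 - ε) ^ J := by
                have : (0:ℝ) ≤ 1 - ε := by linarith
                positivity
              linarith
          _ ≤ Phat ε K T := ih hJ

/-- Probability that all `N` receivers (over i.i.d. erasure channels) decode a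
network-coded block of `K` packets within `T` slots. -/
noncomputable def Pall (ε : ℝ) (N K T : ℕ) : ℝ := (Phat ε K T) ^ N

/-- For `0 < ε < 1`, `N ≥ 1` and `1 ≤ K < K' ≤ T`, the decoding
probability is strictly decreasing in the block size: `P(K',T) < P(K,T)`. -/
theorem pall_strict_anti (ε : ℝ) (hε0 : 0 < ε) (hε1 : ε < 1) (N : ℕ) (hN : 1 ≤ N)
    (K K' T : ℕ) (hK : 1 ≤ K) (hKK' : K < K') (hK'T : K' ≤ T) :
    Pall ε N K' T < Pall ε N K T := by
  have hphat : Phat ε K' T < Phat ε K T := by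
    have h1 : Phat ε K' T ≤ Phat ε (K+1) T :=
      phat_anti ε (le_of_lt hε0) (le_of_lt hε1) (K+1) K' T (by omega) hKK'
    have h2 : Phat ε (K+1) T < Phat ε K T := by
      rw [phat_step ε K T hK]
      have hpos : (0:ℝ) < (T.choose K : ℝ) * ε ^ (T - K) * (1 - ε) ^ K := by
        have hc : 0 < T.choose K := Nat.choose_pos (by omega)
        have h1ε : (0:ℝ) < 1 - ε := by linarith
        have : (0:ℝ) < (T.choose K : ℝ) := by exact_mod_cast hc
        positivity
      linarith
    linarith
  unfold Pall
  exact pow_lt_pow_left₀ hphat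
    (phat_nonneg ε (le_of_lt hε0) (le_of_lt hε1) K' T) (by omega)
end

section
/- For every erasure probability ε with 0 < ε < 1 and all integers K, T with 2 ≤ K ≤ T, the inequality P̂(K−1,T) · ((T−K+1)/K) · ((1−ε)/ε) ≥ P̂(K,T) holds. -/
lemma key_nat (K j T : ℕ) (hKj : K ≤ j) (hjT : j ≤ T) (hj : 1 ≤ j) :
    K * T.choose j ≤ (T - K + 1) * T.choose (j - 1) :=
  calc K * T.choose j ≤ j * T.choose j := Nat.mul_le_mul_right _ hKj
    _ = (T - (j - 1)) * T.choose (j - 1) := by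
        have h := Nat.choose_succ_right_eq T (j - 1)
        have ej : j - 1 + 1 = j := by omega
        rw [ej] at h
        rw [Nat.mul_comm, h, Nat.mul_comm]
    _ ≤ (T - K + 1) * T.choose (j - 1) :=
        Nat.mul_le_mul_right _ (by omega)

/-- Negative-binomial partial sum equals binomial tail. -/
lemma tail_eq (ε : ℝ) (K : ℕ) (hK : 1 ≤ K) :
    ∀ T, K ≤ T →
      Phat ε K T = ∑ j ∈ Finset.Icc K T, (T.choose j : ℝ) * (1 - ε) ^ j * ε ^ (T - j) := by
  intro T hT
  induction T, hT using Nat.le_induction with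
  | base =>
      simp [Phat, Nat.choose_self]
  | succ T hT ih =>
      have hKT1 : K ≤ T + 1 := by omega
      have hS : Phat ε K (T + 1) =
          Phat ε K T + ((T.choose (K - 1) : ℝ)) * ε ^ (T + 1 - K) * (1 - ε) ^ K := by
        unfold Phat
        rw [Finset.sum_Icc_succ_top hKT1]
        simp
      rw [hS, ih]
      have hsplit : ∀ j ∈ Finset.Icc K T,
          ((T + 1).choose j : ℝ) * (1 - ε) ^ j * ε ^ (T + 1 - j)
          = (1 - ε) * ((T.choose (j-1) : ℝ) * (1 - ε) ^ (j-1) * ε ^ (T - (j-1)))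
            + ε * ((T.choose j : ℝ) * (1 - ε) ^ j * ε ^ (T - j)) := by
        intro j hj
        simp only [Finset.mem_Icc] at hj
        obtain ⟨h1, h2⟩ := hj
        have hj1 : 1 ≤ j := le_trans hK h1
        have e2 : T + 1 - j = (T - j) + 1 := by omega
        have e3 : T - (j - 1) = (T - j) + 1 := by omega
        have ec : (T+1).choose j = T.choose (j-1) + T.choose j := by
          conv_lhs => rw [show j = (j-1)+1 by omega]
          rw [Nat.choose_succ_succ]
          have : (j-1).succ = j := by omega
          rw [this]
        have ep : (1-ε)^j = (1-ε)^(j-1) * (1-ε) := by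
          conv_lhs => rw [show j = (j-1)+1 by omega]
          rw [pow_succ]
        rw [e2, e3, ec, ep]
        push_cast
        ring
      rw [Finset.sum_Icc_succ_top hKT1, Finset.sum_congr rfl hsplit,
        Finset.sum_add_distrib, ← Finset.mul_sum, ← Finset.mul_sum]
      have hre : ∑ j ∈ Finset.Icc K T,
          ((T.choose (j-1) : ℝ) * (1 - ε) ^ (j-1) * ε ^ (T - (j-1)))
          = ∑ i ∈ Finset.Icc (K-1) (T-1),
            ((T.choose i : ℝ) * (1 - ε) ^ i * ε ^ (T - i)) := by
        rw [Finset.sum_bij (fun j _ => j - 1)]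
        · intro a ha; simp only [Finset.mem_Icc] at *; omega
        · intro a ha b hb hab; simp only [Finset.mem_Icc] at *; omega
        · intro b hb; simp only [Finset.mem_Icc] at hb
          exact ⟨b + 1, Finset.mem_Icc.2 (by omega), by omega⟩
        · intro a ha; rfl
      have hins1 : Finset.Icc (K-1) (T-1) = insert (K-1) (Finset.Icc K (T-1)) := by
        ext x; simp only [Finset.mem_Icc, Finset.mem_insert]; omega
      have hmem1 : K - 1 ∉ Finset.Icc K (T-1) := by
        simp only [Finset.mem_Icc]; omega
      have hins2 : Finset.Icc K T = insert T (Finset.Icc K (T-1)) := by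
        ext x; simp only [Finset.mem_Icc, Finset.mem_insert]; omega
      have hmem2 : T ∉ Finset.Icc K (T-1) := by
        simp only [Finset.mem_Icc]; omega
      rw [hre, hins1, hins2]
      have e4 : T - (K - 1) = T + 1 - K := by omega
      have e6 : (1-ε)^K = (1-ε)^(K-1) * (1-ε) := by
        conv_lhs => rw [show K = (K-1)+1 by omega]
        rw [pow_succ]
      simp only [Finset.sum_insert hmem1, Finset.sum_insert hmem2, Nat.choose_self,
        Nat.sub_self, Nat.cast_one, pow_zero, mul_one, one_mul]
      rw [e4, e6, pow_succ]
      ring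

/-- For `0 < ε < 1` and `2 ≤ K ≤ T`,
`P̂(K-1,T) · ((T-K+1)/K) · ((1-ε)/ε) ≥ P̂(K,T)`. -/
theorem phat_ratio_ineq (ε : ℝ) (hε0 : 0 < ε) (hε1 : ε < 1) (K T : ℕ)
    (hK : 2 ≤ K) (hKT : K ≤ T) :
    Phat ε (K - 1) T * (((T : ℝ) - (K : ℝ) + 1) / (K : ℝ)) * ((1 - ε) / ε) ≥
      Phat ε K T := by
  have hp : (0:ℝ) < 1 - ε := by linarith
  have hKpos : (0:ℝ) < (K:ℝ) := by positivity
  have hc1 : (0:ℝ) ≤ ((T : ℝ) - (K : ℝ) + 1) / (K : ℝ) := by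
    apply div_nonneg _ (le_of_lt hKpos)
    have : (K:ℝ) ≤ (T:ℝ) := by exact_mod_cast hKT
    linarith
  have hc2 : (0:ℝ) ≤ (1 - ε) / ε := by positivity
  rw [ge_iff_le, tail_eq ε K (by omega) T hKT, tail_eq ε (K-1) (by omega) T (by omega)]
  set f : ℕ → ℝ := fun i => (T.choose i : ℝ) * (1 - ε) ^ i * ε ^ (T - i) with hf
  have hstep1 : (∑ i ∈ Finset.Icc (K-1) (T-1), f i) * (((T : ℝ) - (K : ℝ) + 1) / (K : ℝ)) * ((1 - ε) / ε)
      ≤ (∑ i ∈ Finset.Icc (K-1) T, f i) * (((T : ℝ) - (K : ℝ) + 1) / (K : ℝ)) * ((1 - ε) / ε) := by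
    apply mul_le_mul_of_nonneg_right _ hc2
    apply mul_le_mul_of_nonneg_right _ hc1
    apply Finset.sum_le_sum_of_subset_of_nonneg
    · apply Finset.Icc_subset_Icc_right; omega
    · intro i _ _
      have : (0:ℝ) ≤ f i := by rw [hf]; positivity
      exact this
  refine le_trans ?_ hstep1
  rw [Finset.sum_mul, Finset.sum_mul]
  have hre : ∑ j ∈ Finset.Icc K T,
      (f (j-1) * (((T : ℝ) - (K : ℝ) + 1) / (K : ℝ)) * ((1 - ε) / ε))
      = ∑ i ∈ Finset.Icc (K-1) (T-1),
        (f i * (((T : ℝ) - (K : ℝ) + 1) / (K : ℝ)) * ((1 - ε) / ε)) := by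
    rw [Finset.sum_bij (fun j _ => j - 1)]
    · intro a ha; simp only [Finset.mem_Icc] at *; omega
    · intro a ha b hb hab; simp only [Finset.mem_Icc] at *; omega
    · intro b hb; simp only [Finset.mem_Icc] at hb
      exact ⟨b + 1, Finset.mem_Icc.2 (by omega), by omega⟩
    · intro a ha; rfl
  rw [← hre]
  apply Finset.sum_le_sum
  intro j hj
  simp only [Finset.mem_Icc] at hj
  obtain ⟨h1, h2⟩ := hj
  have hj1 : 1 ≤ j := by omega
  have hkey : (K:ℝ) * (T.choose j : ℝ) ≤ ((T:ℝ) - (K:ℝ) + 1) * (T.choose (j-1) : ℝ) := by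
    have h := key_nat K j T h1 h2 hj1
    have hc : ((T - K + 1 : ℕ) : ℝ) = (T:ℝ) - (K:ℝ) + 1 := by
      push_cast [Nat.cast_sub hKT]; ring
    calc (K:ℝ) * (T.choose j : ℝ) = ((K * T.choose j : ℕ) : ℝ) := by push_cast; ring
      _ ≤ (((T - K + 1) * T.choose (j-1) : ℕ) : ℝ) := by exact_mod_cast h
      _ = ((T:ℝ) - (K:ℝ) + 1) * (T.choose (j-1) : ℝ) := by push_cast [Nat.cast_sub hKT]; ring
  have h2eq : f (j-1) * (((T : ℝ) - (K : ℝ) + 1) / (K : ℝ)) * ((1 - ε) / ε)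
      = (((T:ℝ) - (K:ℝ) + 1) * (T.choose (j-1) : ℝ) / K) * ((1-ε) ^ j * ε ^ (T - j)) := by
    rw [hf]
    simp only []
    have hqj : ε ^ (T - (j-1)) = ε ^ (T - j) * ε := by
      rw [show T - (j-1) = (T - j) + 1 by omega, pow_succ]
    have hpj : (1-ε) ^ j = (1-ε) ^ (j-1) * (1-ε) := by
      conv_lhs => rw [show j = (j-1)+1 by omega]
      rw [pow_succ]
    rw [hqj, hpj]
    field_simp
  rw [h2eq]
  have hbase : (T.choose j : ℝ) ≤ ((T:ℝ) - (K:ℝ) + 1) * (T.choose (j-1) : ℝ) / K := by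
    rw [le_div_iff₀ hKpos]
    linarith [hkey]
  calc (T.choose j : ℝ) * (1 - ε) ^ j * ε ^ (T - j)
      = (T.choose j : ℝ) * ((1 - ε) ^ j * ε ^ (T - j)) := by ring
    _ ≤ (((T:ℝ) - (K:ℝ) + 1) * (T.choose (j-1) : ℝ) / K) * ((1-ε) ^ j * ε ^ (T - j)) := by
        apply mul_le_mul_of_nonneg_right hbase (by positivity)
    _ = _ := rfl
end

section
/- For every erasure probability ε with 0 < ε < 1 and all integers K, T with 2 ≤ K and K+1 ≤ T, the single-receiver decoding probability is log-concave in the block size: P̂(K,T)² ≥ P̂(K−1,T) · P̂(K+1,T). -/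
open Finset

/-- Binomial tail sum. -/
noncomputable def Bsum (ε : ℝ) (K T : ℕ) : ℝ :=
  ∑ j ∈ Finset.Icc K T, (T.choose j : ℝ) * (1 - ε) ^ j * ε ^ (T - j)

lemma sum_Icc_split_bot (a : ℕ → ℝ) (K T : ℕ) (h1 : 1 ≤ K) (h2 : K - 1 ≤ T) :
    ∑ j ∈ Finset.Icc (K - 1) T, a j = a (K - 1) + ∑ j ∈ Finset.Icc K T, a j := by
  have hins : Finset.Icc (K - 1) T = insert (K - 1) (Finset.Icc K T) := by
    ext x; simp only [Finset.mem_Icc, Finset.mem_insert]; omega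
  rw [hins, Finset.sum_insert (by simp [Finset.mem_Icc]; omega)]

lemma sum_Icc_split_top (a : ℕ → ℝ) (K T : ℕ) (h : K ≤ T + 1) :
    ∑ j ∈ Finset.Icc K (T + 1), a j = (∑ j ∈ Finset.Icc K T, a j) + a (T + 1) := by
  have hins : Finset.Icc K (T + 1) = insert (T + 1) (Finset.Icc K T) := by
    ext x; simp only [Finset.mem_Icc, Finset.mem_insert]; omega
  rw [hins, Finset.sum_insert (by simp [Finset.mem_Icc]), add_comm]

lemma Bsum_succ (ε : ℝ) (K T : ℕ) (hK : 1 ≤ K) :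
    Bsum ε K (T + 1) = Bsum ε K T + (T.choose (K - 1) : ℝ) * (1 - ε) ^ K * ε ^ (T + 1 - K) := by
  rcases le_or_gt K (T + 1) with h | h
  · have pascal : ∀ j ∈ Finset.Icc K (T + 1), ((T + 1).choose j : ℝ) * (1 - ε) ^ j * ε ^ (T + 1 - j)
        = (T.choose j : ℝ) * (1 - ε) ^ j * ε ^ (T + 1 - j)
          + (T.choose (j - 1) : ℝ) * (1 - ε) ^ j * ε ^ (T + 1 - j) := by
      intro j hj
      simp only [Finset.mem_Icc] at hj
      obtain ⟨m, rfl⟩ : ∃ m, j = m + 1 := ⟨j - 1, by omega⟩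
      simp only [Nat.add_sub_cancel]
      rw [Nat.choose_succ_succ]
      push_cast
      ring
    have e1 : ∑ j ∈ Finset.Icc K (T + 1), (T.choose j : ℝ) * (1 - ε) ^ j * ε ^ (T + 1 - j)
        = ε * Bsum ε K T := by
      rw [sum_Icc_split_top _ K T h]
      simp only [Nat.choose_succ_self, Nat.cast_zero, zero_mul, add_zero]
      rw [Bsum, Finset.mul_sum]
      refine Finset.sum_congr rfl fun j hj => ?_
      simp only [Finset.mem_Icc] at hj
      have hj' : T + 1 - j = (T - j) + 1 := by omega
      rw [hj', pow_succ]
      ring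
    have e2 : ∑ j ∈ Finset.Icc K (T + 1), (T.choose (j - 1) : ℝ) * (1 - ε) ^ j * ε ^ (T + 1 - j)
        = (1 - ε) * Bsum ε (K - 1) T := by
      have hmap : Finset.Icc K (T + 1) = (Finset.Icc (K - 1) T).map (addRightEmbedding 1) := by
        rw [Finset.map_add_right_Icc]
        congr 1 <;> omega
      rw [hmap, Finset.sum_map, Bsum, Finset.mul_sum]
      refine Finset.sum_congr rfl fun i hi => ?_
      simp only [Finset.mem_Icc] at hi
      simp only [addRightEmbedding_apply]
      have h1 : i + 1 - 1 = i := by omega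
      have h2 : T + 1 - (i + 1) = T - i := by omega
      rw [h1, h2, pow_succ]
      ring
    have expand : Bsum ε K (T + 1) = ε * Bsum ε K T + (1 - ε) * Bsum ε (K - 1) T := by
      rw [Bsum, Finset.sum_congr rfl pascal, Finset.sum_add_distrib, e1, e2]
    have e3 : Bsum ε (K - 1) T
        = (T.choose (K - 1) : ℝ) * (1 - ε) ^ (K - 1) * ε ^ (T - (K - 1)) + Bsum ε K T := by
      rw [Bsum, sum_Icc_split_bot _ K T hK (by omega), Bsum]
    have h4 : T - (K - 1) = T + 1 - K := by omega
    have hpow : (1 - ε) * (1 - ε) ^ (K - 1) = (1 - ε) ^ K := by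
      rw [← pow_succ']
      congr 1
      omega
    rw [expand, e3, h4, ← hpow]
    ring
  · have hempty1 : Finset.Icc K (T + 1) = ∅ := Finset.Icc_eq_empty (by omega)
    have hempty2 : Finset.Icc K T = ∅ := Finset.Icc_eq_empty (by omega)
    have hc : T.choose (K - 1) = 0 := Nat.choose_eq_zero_of_lt (by omega)
    simp [Bsum, hempty1, hempty2, hc]

lemma phat_eq_Bsum (ε : ℝ) (K : ℕ) (hK : 1 ≤ K) : ∀ T, Phat ε K T = Bsum ε K T := by
  intro T
  induction T with
  | zero =>
    have hempty : Finset.Icc K 0 = ∅ := Finset.Icc_eq_empty (by omega)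
    simp [Phat, Bsum, hempty]
  | succ T ih =>
    rcases le_or_gt K (T + 1) with h | h
    · rw [Phat, sum_Icc_split_top _ K T h, ← Phat, ih, Bsum_succ ε K T hK]
      have h1 : T + 1 - 1 = T := by omega
      rw [h1]; ring
    · have hempty1 : Finset.Icc K (T + 1) = ∅ := Finset.Icc_eq_empty (by omega)
      have hempty2 : Finset.Icc K T = ∅ := Finset.Icc_eq_empty (by omega)
      simp [Phat, Bsum, hempty1, hempty2]

lemma choose_lc (T K j : ℕ) (hK : 1 ≤ K) (hj : K ≤ j) :
    T.choose (K - 1) * T.choose (j + 1) ≤ T.choose K * T.choose j := by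
  have h1 : T.choose K * K = T.choose (K - 1) * (T - (K - 1)) := by
    have h := Nat.choose_succ_right_eq T (K - 1)
    have hk : K - 1 + 1 = K := by omega
    rwa [hk] at h
  have h2 : T.choose (j + 1) * (j + 1) = T.choose j * (T - j) := Nat.choose_succ_right_eq T j
  have key : (T - j) * K ≤ (T - (K - 1)) * (j + 1) :=
    Nat.mul_le_mul (by omega) (by omega)
  have hpos : 0 < K * (j + 1) := by positivity
  refine Nat.le_of_mul_le_mul_right ?_ hpos
  calc T.choose (K - 1) * T.choose (j + 1) * (K * (j + 1))
      = T.choose (K - 1) * (T.choose (j + 1) * (j + 1)) * K := by ring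
    _ = T.choose (K - 1) * (T.choose j * (T - j)) * K := by rw [h2]
    _ = T.choose (K - 1) * T.choose j * ((T - j) * K) := by ring
    _ ≤ T.choose (K - 1) * T.choose j * ((T - (K - 1)) * (j + 1)) :=
        Nat.mul_le_mul_left _ key
    _ = T.choose (K - 1) * (T - (K - 1)) * (T.choose j * (j + 1)) := by ring
    _ = T.choose K * K * (T.choose j * (j + 1)) := by rw [h1]
    _ = T.choose K * T.choose j * (K * (j + 1)) := by ring

lemma tail_lc (a : ℕ → ℝ) (K T : ℕ) (hK : 1 ≤ K) (hKT : K + 1 ≤ T)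
    (ha : ∀ j, 0 ≤ a j) (haT : a (T + 1) = 0)
    (hlc : ∀ j, K ≤ j → a (K - 1) * a (j + 1) ≤ a K * a j) :
    (∑ j ∈ Finset.Icc (K - 1) T, a j) * (∑ j ∈ Finset.Icc (K + 1) T, a j)
      ≤ (∑ j ∈ Finset.Icc K T, a j) ^ 2 := by
  set S := ∑ j ∈ Finset.Icc K T, a j with hS
  have h1 : ∑ j ∈ Finset.Icc (K - 1) T, a j = a (K - 1) + S :=
    sum_Icc_split_bot a K T hK (by omega)
  have h2 : S = a K + ∑ j ∈ Finset.Icc (K + 1) T, a j := by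
    have h := sum_Icc_split_bot a (K + 1) T (by omega) (by omega)
    simpa using h
  have key : (a (K - 1) - a K) * S ≤ a (K - 1) * a K := by
    have step1 : (a (K - 1) - a K) * S = ∑ j ∈ Finset.Icc K T, (a (K - 1) - a K) * a j := by
      rw [Finset.mul_sum]
    have step2 : ∑ j ∈ Finset.Icc K T, (a (K - 1) - a K) * a j
        ≤ ∑ j ∈ Finset.Icc K T, (a (K - 1) * a j - a (K - 1) * a (j + 1)) := by
      refine Finset.sum_le_sum fun j hj => ?_
      simp only [Finset.mem_Icc] at hj
      have hh := hlc j hj.1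
      nlinarith [hh]
    have step3 : ∑ j ∈ Finset.Icc K T, (a (K - 1) * a j - a (K - 1) * a (j + 1))
        = a (K - 1) * a K := by
      have hmap : Finset.Icc K T = (Finset.range (T + 1 - K)).map
          ⟨fun i => K + i, show Function.Injective (fun i => K + i) from fun x y h => by exact add_left_cancel h⟩ := by
        ext x
        simp only [Finset.mem_Icc, Finset.mem_map, Finset.mem_range, Function.Embedding.coeFn_mk]
        constructor
        · intro hx; exact ⟨x - K, by omega, by omega⟩
        · rintro ⟨i, hi, rfl⟩; omega
      rw [hmap, Finset.sum_map]
      simp only [Function.Embedding.coeFn_mk]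
      calc ∑ i ∈ Finset.range (T + 1 - K), (a (K - 1) * a (K + i) - a (K - 1) * a (K + i + 1))
          = ∑ i ∈ Finset.range (T + 1 - K), ((fun i => a (K - 1) * a (K + i)) i
              - (fun i => a (K - 1) * a (K + i)) (i + 1)) := by
            refine Finset.sum_congr rfl fun i _ => ?_
            have heq : K + (i + 1) = K + i + 1 := by omega
            simp only [heq]
        _ = a (K - 1) * a (K + 0) - a (K - 1) * a (K + (T + 1 - K)) :=
            Finset.sum_range_sub' _ _
        _ = a (K - 1) * a K := by
            have he : K + (T + 1 - K) = T + 1 := by omega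
            rw [he, haT, add_zero]; ring
    linarith [step1.le, step2, step3.le]
  have hS0 : 0 ≤ S := Finset.sum_nonneg fun j _ => ha j
  nlinarith [key, ha (K - 1), ha K, hS0]

/-- For `0 < ε < 1`, `2 ≤ K` and `K+1 ≤ T`, the single-receiver
decoding probability is log-concave in the block size:
`P̂(K,T)² ≥ P̂(K-1,T) · P̂(K+1,T)`. -/
theorem phat_log_concave (ε : ℝ) (hε0 : 0 < ε) (hε1 : ε < 1) (K T : ℕ)
    (hK : 2 ≤ K) (hKT : K + 1 ≤ T) :
    Phat ε (K - 1) T * Phat ε (K + 1) T ≤ (Phat ε K T) ^ 2 := by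
  have hp : (0:ℝ) < 1 - ε := by linarith
  rw [phat_eq_Bsum ε (K - 1) (by omega) T, phat_eq_Bsum ε K (by omega) T,
    phat_eq_Bsum ε (K + 1) (by omega) T]
  unfold Bsum
  have hnn : ∀ j, 0 ≤ (T.choose j : ℝ) * (1 - ε) ^ j * ε ^ (T - j) := fun j =>
    mul_nonneg (mul_nonneg (Nat.cast_nonneg _) (pow_nonneg hp.le _)) (pow_nonneg hε0.le _)
  have htop : (T.choose (T + 1) : ℝ) * (1 - ε) ^ (T + 1) * ε ^ (T - (T + 1)) = 0 := by
    simp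
  have hlc : ∀ j, K ≤ j →
      ((T.choose (K - 1) : ℝ) * (1 - ε) ^ (K - 1) * ε ^ (T - (K - 1))) *
        ((T.choose (j + 1) : ℝ) * (1 - ε) ^ (j + 1) * ε ^ (T - (j + 1)))
      ≤ ((T.choose K : ℝ) * (1 - ε) ^ K * ε ^ (T - K)) *
        ((T.choose j : ℝ) * (1 - ε) ^ j * ε ^ (T - j)) := by
    intro j hj
    rcases le_or_gt (j + 1) T with hjT | hjT
    · have hnat := choose_lc T K j (by omega) hj
      have e1 : (K - 1) + (j + 1) = K + j := by omega
      have e2 : (T - (K - 1)) + (T - (j + 1)) = (T - K) + (T - j) := by omega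
      have lhs_eq : ((T.choose (K - 1) : ℝ) * (1 - ε) ^ (K - 1) * ε ^ (T - (K - 1))) *
          ((T.choose (j + 1) : ℝ) * (1 - ε) ^ (j + 1) * ε ^ (T - (j + 1)))
          = ((T.choose (K - 1) * T.choose (j + 1) : ℕ) : ℝ) *
            ((1 - ε) ^ ((K - 1) + (j + 1)) * ε ^ ((T - (K - 1)) + (T - (j + 1)))) := by
        push_cast
        rw [pow_add, pow_add]
        ring
      have rhs_eq : ((T.choose K : ℝ) * (1 - ε) ^ K * ε ^ (T - K)) *
          ((T.choose j : ℝ) * (1 - ε) ^ j * ε ^ (T - j))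
          = ((T.choose K * T.choose j : ℕ) : ℝ) *
            ((1 - ε) ^ (K + j) * ε ^ ((T - K) + (T - j))) := by
        push_cast
        rw [pow_add, pow_add]
        ring
      rw [lhs_eq, rhs_eq, e1, e2]
      refine mul_le_mul_of_nonneg_right ?_ (by positivity)
      exact_mod_cast hnat
    · have hc0 : T.choose (j + 1) = 0 := Nat.choose_eq_zero_of_lt (by omega)
      rw [hc0]
      simp only [Nat.cast_zero, zero_mul, mul_zero]
      exact mul_nonneg (hnn K) (hnn j)
  exact tail_lc (fun j => (T.choose j : ℝ) * (1 - ε) ^ j * ε ^ (T - j)) K T (by omega) hKT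
    hnn htop hlc
end

section
/- For every erasure probability ε with 0 < ε < 1, every integer N ≥ 1, and all integers K, T with 2 ≤ K and K+1 ≤ T, the expected immediate reward is log-concave in the block size: R_T(K)² ≥ R_T(K−1) · R_T(K+1). -/
/-- Expected immediate reward: expected number of packets decoded by all `N`
receivers when a block of size `K` is transmitted with `T` slots remaining. -/
noncomputable def Rew (ε : ℝ) (N T K : ℕ) : ℝ := (K : ℝ) * Pall ε N K T

namespace RewardLogConcaveAux

open Finset

/-- Log-concavity of binomial coefficients. -/
lemma choose_lc (n m : ℕ) : n.choose m * n.choose (m+2) ≤ n.choose (m+1)^2 := by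
  rcases le_or_gt n (m+1) with h | h
  · have : n.choose (m+2) = 0 := Nat.choose_eq_zero_of_lt (by omega)
    simp [this]
  · have h1 : n.choose (m+1) * (m+1) = n.choose m * (n - m) := Nat.choose_succ_right_eq n m
    have h2 : n.choose (m+2) * (m+2) = n.choose (m+1) * (n - (m+1)) :=
      Nat.choose_succ_right_eq n (m+1)
    apply Nat.le_of_mul_le_mul_right _ (show 0 < (m+1)*(m+2) by positivity)
    calc n.choose m * n.choose (m+2) * ((m+1)*(m+2))
        = (n.choose (m+2) * (m+2)) * (n.choose m * (m+1)) := by ring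
      _ = (n.choose (m+1) * (n - (m+1))) * (n.choose m * (m+1)) := by rw [h2]
      _ = (n.choose (m+1) * (m+1)) * (n.choose m * (n - (m+1))) := by ring
      _ = (n.choose m * (n - m)) * (n.choose m * (n - (m+1))) := by rw [h1]
      _ ≤ (n.choose m * (n - m)) * (n.choose m * (n - m)) := by
          apply Nat.mul_le_mul_left
          exact Nat.mul_le_mul_left _ (Nat.sub_le_sub_left (Nat.le_succ m) n)
      _ = (n.choose (m+1) * (m+1)) * (n.choose (m+1) * (m+1)) := by rw [h1]
      _ = n.choose (m+1)^2 * ((m+1)*(m+1)) := by ring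
      _ ≤ n.choose (m+1)^2 * ((m+1)*(m+2)) := by
          apply Nat.mul_le_mul_left
          exact Nat.mul_le_mul_left _ (Nat.le_succ _)

/-- Binomial pmf term. -/
noncomputable def bpmf (ε : ℝ) (T j : ℕ) : ℝ := (T.choose j : ℝ) * (1-ε)^j * ε^(T-j)

lemma bpmf_nonneg {ε : ℝ} (hε0 : 0 < ε) (hε1 : ε < 1) (T j : ℕ) : 0 ≤ bpmf ε T j := by
  unfold bpmf
  have : (0:ℝ) ≤ 1 - ε := by linarith
  positivity

lemma bpmf_pos {ε : ℝ} (hε0 : 0 < ε) (hε1 : ε < 1) {T j : ℕ} (h : j ≤ T) :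
    0 < bpmf ε T j := by
  unfold bpmf
  have h1 : (0:ℝ) < 1 - ε := by linarith
  have h2 : (0:ℝ) < (T.choose j : ℝ) := by exact_mod_cast Nat.choose_pos h
  positivity

lemma bpmf_lc {ε : ℝ} (hε0 : 0 < ε) (hε1 : ε < 1) (T m : ℕ) :
    bpmf ε T m * bpmf ε T (m+2) ≤ bpmf ε T (m+1)^2 := by
  rcases le_or_gt (m+2) T with h | h
  · have e1 : (1-ε)^m * (1-ε)^(m+2) = ((1-ε)^(m+1))^2 := by ring
    have e2 : ε^(T-m) * ε^(T-(m+2)) = (ε^(T-(m+1)))^2 := by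
      rw [sq, ← pow_add, ← pow_add]; congr 1; omega
    have hc : (↑(T.choose m) * ↑(T.choose (m+2)) : ℝ) ≤ (↑(T.choose (m+1)) : ℝ)^2 := by
      have := choose_lc T m
      exact_mod_cast this
    have hp : (0:ℝ) ≤ ((1-ε)^(m+1))^2 * (ε^(T-(m+1)))^2 := by positivity
    calc bpmf ε T m * bpmf ε T (m+2)
        = (↑(T.choose m) * ↑(T.choose (m+2))) * (((1-ε)^m * (1-ε)^(m+2)) * (ε^(T-m) * ε^(T-(m+2)))) := by
          unfold bpmf; ring
      _ = (↑(T.choose m) * ↑(T.choose (m+2))) * (((1-ε)^(m+1))^2 * (ε^(T-(m+1)))^2) := by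
          rw [e1, e2]
      _ ≤ (↑(T.choose (m+1)):ℝ)^2 * (((1-ε)^(m+1))^2 * (ε^(T-(m+1)))^2) :=
          mul_le_mul_of_nonneg_right hc hp
      _ = bpmf ε T (m+1)^2 := by unfold bpmf; ring
  · have : T.choose (m+2) = 0 := Nat.choose_eq_zero_of_lt h
    have hz : bpmf ε T (m+2) = 0 := by unfold bpmf; rw [this]; simp
    rw [hz, mul_zero]
    positivity

/-- Ratio monotonicity chain. -/
lemma bpmf_chain {ε : ℝ} (hε0 : 0 < ε) (hε1 : ε < 1) (T m : ℕ) :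
    ∀ j, m + 1 ≤ j → j ≤ T →
      bpmf ε T m * bpmf ε T (j+1) ≤ bpmf ε T (m+1) * bpmf ε T j := by
  intro j hj
  induction j, hj using Nat.le_induction with
  | base => intro _; simpa [sq] using bpmf_lc hε0 hε1 T m
  | succ j hj ih =>
    intro hjT
    have hjT' : j ≤ T := by omega
    have ih' := ih hjT'
    have hlc := bpmf_lc hε0 hε1 T j
    have hpos := bpmf_pos hε0 hε1 hjT'
    have h0 := bpmf_nonneg hε0 hε1 T m
    have h1 := bpmf_nonneg hε0 hε1 T (j+1)
    apply le_of_mul_le_mul_right _ hpos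
    calc bpmf ε T m * bpmf ε T (j+2) * bpmf ε T j
        = bpmf ε T m * (bpmf ε T j * bpmf ε T (j+2)) := by ring
      _ ≤ bpmf ε T m * (bpmf ε T (j+1))^2 := by
          exact mul_le_mul_of_nonneg_left hlc h0
      _ = (bpmf ε T m * bpmf ε T (j+1)) * bpmf ε T (j+1) := by ring
      _ ≤ (bpmf ε T (m+1) * bpmf ε T j) * bpmf ε T (j+1) :=
          mul_le_mul_of_nonneg_right ih' h1
      _ = bpmf ε T (m+1) * bpmf ε T (j+1) * bpmf ε T j := by ring

/-- Binomial upper tail. -/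
noncomputable def btail (ε : ℝ) (K T : ℕ) : ℝ := ∑ j ∈ Icc K T, bpmf ε T j

lemma btail_split {ε : ℝ} {K T : ℕ} (h : K ≤ T) :
    btail ε K T = bpmf ε T K + btail ε (K+1) T := by
  unfold btail
  rw [Finset.Icc_add_one_left_eq_Ioc]
  exact (Finset.add_sum_Ioc_eq_sum_Icc h).symm

/-- Log-concavity of the binomial upper tail. -/
lemma btail_lc {ε : ℝ} (hε0 : 0 < ε) (hε1 : ε < 1) (m T : ℕ) (hT : m + 2 ≤ T) :
    btail ε m T * btail ε (m+2) T ≤ btail ε (m+1) T ^ 2 := by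
  have d1 : btail ε m T = bpmf ε T m + btail ε (m+1) T := btail_split (by omega)
  have d2 : btail ε (m+1) T = bpmf ε T (m+1) + btail ε (m+2) T := btail_split (by omega)
  have key : bpmf ε T m * btail ε (m+2) T ≤ bpmf ε T (m+1) * btail ε (m+1) T := by
    have hre : btail ε (m+2) T = ∑ j ∈ Icc (m+1) (T-1), bpmf ε T (j+1) := by
      unfold btail
      have hmap : Icc (m+2) T = Finset.map (addRightEmbedding 1) (Icc (m+1) (T-1)) := by
        rw [Finset.map_add_right_Icc]
        congr 1
        omega
      rw [hmap, Finset.sum_map]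
      rfl
    rw [hre, Finset.mul_sum]
    calc ∑ j ∈ Icc (m+1) (T-1), bpmf ε T m * bpmf ε T (j+1)
        ≤ ∑ j ∈ Icc (m+1) (T-1), bpmf ε T (m+1) * bpmf ε T j := by
          apply Finset.sum_le_sum
          intro j hj
          rw [Finset.mem_Icc] at hj
          exact bpmf_chain hε0 hε1 T m j hj.1 (by omega)
      _ ≤ ∑ j ∈ Icc (m+1) T, bpmf ε T (m+1) * bpmf ε T j := by
          apply Finset.sum_le_sum_of_subset_of_nonneg
          · exact Finset.Icc_subset_Icc_right (by omega)
          · intro j _ _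
            exact mul_nonneg (bpmf_nonneg hε0 hε1 T (m+1)) (bpmf_nonneg hε0 hε1 T j)
      _ = bpmf ε T (m+1) * btail ε (m+1) T := by rw [btail, Finset.mul_sum]
  rw [d1, d2]
  rw [d2] at key
  nlinarith [key]

/-- The negative-binomial form `Phat` equals the binomial upper tail. -/
lemma Phat_eq_btail (ε : ℝ) (K : ℕ) (hK : 1 ≤ K) :
    ∀ T, Phat ε K T = btail ε K T := by
  intro T
  induction T with
  | zero =>
    have h : Icc K 0 = ∅ := Finset.Icc_eq_empty (by omega)
    simp [Phat, btail, h]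
  | succ T ih =>
    rcases le_or_gt K (T+1) with hKT | hKT
    · have hL : Phat ε K (T+1) = Phat ε K T
          + (T.choose (K-1) : ℝ) * ε ^ (T+1-K) * (1-ε)^K := by
        unfold Phat
        rw [Finset.sum_Icc_succ_top hKT]
        norm_num
      have hR : btail ε K (T+1) = btail ε K T
          + (T.choose (K-1) : ℝ) * ε ^ (T+1-K) * (1-ε)^K := by
        unfold btail
        have pascal : ∀ j ∈ Icc K (T+1),
            bpmf ε (T+1) j = (T.choose (j-1) : ℝ) * (1-ε)^j * ε^(T+1-j)
              + (T.choose j : ℝ) * (1-ε)^j * ε^(T+1-j) := by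
          intro j hj
          rw [Finset.mem_Icc] at hj
          have hj1 : 1 ≤ j := by omega
          have : (T+1).choose j = T.choose (j-1) + T.choose j := by
            obtain ⟨i, rfl⟩ := Nat.exists_eq_add_of_le hj1
            simp [Nat.choose_succ_succ, Nat.add_comm]
          unfold bpmf
          rw [this]
          push_cast
          ring
        rw [Finset.sum_congr rfl pascal, Finset.sum_add_distrib]
        have hA : ∑ j ∈ Icc K (T+1), (T.choose j : ℝ) * (1-ε)^j * ε^(T+1-j)
            = ε * ∑ j ∈ Icc K T, bpmf ε T j := by
          rw [Finset.sum_Icc_succ_top hKT]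
          have : (T.choose (T+1) : ℝ) = 0 := by
            simp [Nat.choose_eq_zero_of_lt]
          rw [this, Finset.mul_sum]
          simp only [zero_mul, add_zero]
          apply Finset.sum_congr rfl
          intro j hj
          rw [Finset.mem_Icc] at hj
          have : T + 1 - j = (T - j) + 1 := by omega
          rw [this]
          unfold bpmf
          ring
        have hB : ∑ j ∈ Icc K (T+1), (T.choose (j-1) : ℝ) * (1-ε)^j * ε^(T+1-j)
            = (1-ε) * ((T.choose (K-1) : ℝ) * (1-ε)^(K-1) * ε^(T-(K-1))
              + ∑ j ∈ Icc K T, bpmf ε T j) := by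
          have hmap : Icc K (T+1) = Finset.map (addRightEmbedding 1) (Icc (K-1) T) := by
            rw [Finset.map_add_right_Icc]
            congr 1
            omega
          rw [hmap, Finset.sum_map]
          have : ∀ i ∈ Icc (K-1) T,
              (T.choose ((addRightEmbedding 1 i) - 1) : ℝ) * (1-ε)^(addRightEmbedding 1 i)
                * ε^(T+1-(addRightEmbedding 1 i))
              = (1-ε) * bpmf ε T i := by
            intro i hi
            rw [Finset.mem_Icc] at hi
            simp only [addRightEmbedding_apply, Nat.add_sub_cancel]
            have : T + 1 - (i + 1) = T - i := by omega
            rw [this]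
            unfold bpmf
            ring
          rw [Finset.sum_congr rfl this, ← Finset.mul_sum]
          congr 1
          have hsplit : Icc (K-1) T = insert (K-1) (Icc K T) := by
            have h1 : Icc K T = Ioc (K-1) T := by
              rw [← Finset.Icc_add_one_left_eq_Ioc]
              congr 1
              omega
            rw [h1, Finset.Ioc_insert_left (by omega)]
          rw [hsplit, Finset.sum_insert (by
            intro hmem
            rw [Finset.mem_Icc] at hmem
            omega)]
          rfl
        rw [hA, hB]
        have e1 : (1-ε) * (1-ε)^(K-1) = (1-ε)^K := by
          rw [← pow_succ']
          congr 1
          omega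
        have e2 : T - (K-1) = T + 1 - K := by omega
        rw [e2]
        linear_combination ((T.choose (K-1) : ℝ) * ε^(T+1-K)) * e1
      rw [hL, hR, ih]
    · have h1 : Icc K (T+1) = ∅ := Finset.Icc_eq_empty (by omega)
      have h2 : Icc K T = ∅ := Finset.Icc_eq_empty (by omega)
      simp [Phat, btail, h1, h2]

end RewardLogConcaveAux

open RewardLogConcaveAux in
/-- For `0 < ε < 1`, `N ≥ 1`, `2 ≤ K` and `K+1 ≤ T`, the expected
immediate reward is log-concave in the block size: `R_T(K)² ≥ R_T(K-1) · R_T(K+1)`. -/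
theorem reward_log_concave (ε : ℝ) (hε0 : 0 < ε) (hε1 : ε < 1) (N : ℕ) (hN : 1 ≤ N)
    (K T : ℕ) (hK : 2 ≤ K) (hKT : K + 1 ≤ T) :
    Rew ε N T (K - 1) * Rew ε N T (K + 1) ≤ (Rew ε N T K) ^ 2 := by
  have hp0 : (0:ℝ) < 1 - ε := by linarith
  have hPnonneg : ∀ k, 0 ≤ Phat ε k T := by
    intro k
    apply Finset.sum_nonneg
    intro τ _
    have h1 : (0:ℝ) ≤ 1 - ε := le_of_lt hp0
    positivity
  have hlc : Phat ε (K-1) T * Phat ε (K+1) T ≤ Phat ε K T ^ 2 := by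
    have e1 := Phat_eq_btail ε (K-1) (by omega) T
    have e2 := Phat_eq_btail ε K (by omega) T
    have e3 := Phat_eq_btail ε (K+1) (by omega) T
    have h := btail_lc hε0 hε1 (K-1) T (by omega)
    have hm1 : K - 1 + 1 = K := by omega
    have hm2 : K - 1 + 2 = K + 1 := by omega
    rw [hm1, hm2] at h
    rw [e1, e2, e3]
    exact h
  have hPP : Phat ε (K-1) T ^ N * Phat ε (K+1) T ^ N ≤ (Phat ε K T ^ N)^2 := by
    calc Phat ε (K-1) T ^ N * Phat ε (K+1) T ^ N
        = (Phat ε (K-1) T * Phat ε (K+1) T) ^ N := (mul_pow _ _ _).symm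
      _ ≤ (Phat ε K T ^ 2) ^ N :=
          pow_le_pow_left₀ (mul_nonneg (hPnonneg _) (hPnonneg _)) hlc N
      _ = (Phat ε K T ^ N) ^ 2 := by rw [← pow_mul, ← pow_mul, Nat.mul_comm]
  have hKK : ((K-1 : ℕ) : ℝ) * ((K+1 : ℕ) : ℝ) ≤ (K:ℝ)^2 := by
    have h1 : ((K-1 : ℕ) : ℝ) = (K:ℝ) - 1 := by
      have : (1:ℕ) ≤ K := by omega
      push_cast [this]
      ring
    rw [h1]
    push_cast
    nlinarith
  have hKnn : (0:ℝ) ≤ ((K-1 : ℕ) : ℝ) * ((K+1 : ℕ) : ℝ) :=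
    mul_nonneg (Nat.cast_nonneg _) (Nat.cast_nonneg _)
  have hPnn : (0:ℝ) ≤ Phat ε (K-1) T ^ N * Phat ε (K+1) T ^ N :=
    mul_nonneg (pow_nonneg (hPnonneg _) _) (pow_nonneg (hPnonneg _) _)
  unfold Rew Pall
  calc ((K-1 : ℕ) : ℝ) * Phat ε (K-1) T ^ N * (((K+1 : ℕ) : ℝ) * Phat ε (K+1) T ^ N)
      = (((K-1 : ℕ) : ℝ) * ((K+1 : ℕ) : ℝ)) * (Phat ε (K-1) T ^ N * Phat ε (K+1) T ^ N) := by
        ring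
    _ ≤ (K:ℝ)^2 * (Phat ε K T ^ N)^2 :=
        mul_le_mul hKK hPP hPnn (by positivity)
    _ = ((K:ℝ) * Phat ε K T ^ N)^2 := by ring
end

section
/- For every erasure probability ε with 0 < ε < 1, every integer N ≥ 1, and every integer T ≥ 1, the greedy block size is monotone in the remaining time: K̂_T ≤ K̂_{T+1}. -/
/-- `Kh` is the greedy block size for horizon `T`: the least maximizer of the
expected immediate reward `K ↦ R_T(K)` over `K ∈ {1,…,T}`. -/
def IsGreedy (ε : ℝ) (N T Kh : ℕ) : Prop :=
  Kh ∈ Finset.Icc 1 T ∧ (∀ K ∈ Finset.Icc 1 T, Rew ε N T K ≤ Rew ε N T Kh) ∧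
  (∀ K ∈ Finset.Icc 1 T, (∀ K' ∈ Finset.Icc 1 T, Rew ε N T K' ≤ Rew ε N T K) → Kh ≤ K)

/-- One-step log-submodularity of binomial coefficients. -/
lemma choose_step_aux (s T j : ℕ) (hsT : s ≤ T) :
    s.choose (j + 1) * T.choose j ≤ s.choose j * T.choose (j + 1) := by
  have h1 := Nat.choose_succ_right_eq s j
  have h2 := Nat.choose_succ_right_eq T j
  have hsub : s - j ≤ T - j := Nat.sub_le_sub_right hsT j
  have hmul : s.choose (j + 1) * T.choose j * (j + 1) ≤ s.choose j * T.choose (j + 1) * (j + 1) := by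
    calc s.choose (j + 1) * T.choose j * (j + 1)
        = (s.choose (j + 1) * (j + 1)) * T.choose j := by ring
      _ = (s.choose j * (s - j)) * T.choose j := by rw [h1]
      _ ≤ (s.choose j * (T - j)) * T.choose j := by
          exact Nat.mul_le_mul_right _ (Nat.mul_le_mul_left _ hsub)
      _ = s.choose j * (T.choose j * (T - j)) := by ring
      _ = s.choose j * (T.choose (j + 1) * (j + 1)) := by rw [h2]
      _ = s.choose j * T.choose (j + 1) * (j + 1) := by ring
  exact Nat.le_of_mul_le_mul_right hmul (Nat.succ_pos j)

/-- Log-submodularity of binomial coefficients along a chain. -/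
lemma choose_chain (s T : ℕ) (hsT : s ≤ T) (i j : ℕ) (hij : i ≤ j) :
    s.choose j * T.choose i ≤ s.choose i * T.choose j := by
  induction j with
  | zero =>
    have : i = 0 := Nat.le_zero.mp hij
    subst this; exact le_refl _
  | succ j ih =>
    rcases Nat.eq_or_lt_of_le hij with rfl | h
    · exact le_refl _
    · have hij' : i ≤ j := Nat.lt_succ_iff.mp h
      have IH := ih hij'
      by_cases hjT : j ≤ T
      · have step := choose_step_aux s T j hsT
        have hmul : s.choose (j + 1) * T.choose i * T.choose j ≤
            s.choose i * T.choose (j + 1) * T.choose j := by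
          calc s.choose (j + 1) * T.choose i * T.choose j
              = (s.choose (j + 1) * T.choose j) * T.choose i := by ring
            _ ≤ (s.choose j * T.choose (j + 1)) * T.choose i := Nat.mul_le_mul_right _ step
            _ = (s.choose j * T.choose i) * T.choose (j + 1) := by ring
            _ ≤ (s.choose i * T.choose j) * T.choose (j + 1) := Nat.mul_le_mul_right _ IH
            _ = s.choose i * T.choose (j + 1) * T.choose j := by ring
        exact Nat.le_of_mul_le_mul_right hmul (Nat.choose_pos hjT)
      · have hs : s < j + 1 := by omega
        rw [Nat.choose_eq_zero_of_lt hs]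
        simp

lemma Phat_nonneg (ε : ℝ) (hε0 : 0 < ε) (hε1 : ε < 1) (K T : ℕ) : 0 ≤ Phat ε K T := by
  apply Finset.sum_nonneg
  intro τ _
  have h1 : (0 : ℝ) ≤ 1 - ε := by linarith
  positivity

lemma Phat_pos (ε : ℝ) (hε0 : 0 < ε) (hε1 : ε < 1) (K T : ℕ) (hKT : K ≤ T) :
    0 < Phat ε K T := by
  have h1 : (0 : ℝ) ≤ 1 - ε := by linarith
  have hterm : (0 : ℝ) < ((K - 1).choose (K - 1) : ℝ) * ε ^ (K - K) * (1 - ε) ^ K := by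
    rw [Nat.choose_self, Nat.sub_self]
    simp only [Nat.cast_one, pow_zero, one_mul, mul_one]
    have : (0 : ℝ) < 1 - ε := by linarith
    positivity
  have hle : ((K - 1).choose (K - 1) : ℝ) * ε ^ (K - K) * (1 - ε) ^ K ≤ Phat ε K T := by
    apply Finset.single_le_sum (f := fun τ : ℕ => ((τ - 1).choose (K - 1) : ℝ) * ε ^ (τ - K) * (1 - ε) ^ K)
    · intro τ _
      positivity
    · exact Finset.mem_Icc.mpr ⟨le_refl K, hKT⟩
  linarith

lemma Phat_succ (ε : ℝ) (K T : ℕ) (hK : K ≤ T + 1) :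
    Phat ε K (T + 1) = Phat ε K T + (T.choose (K - 1) : ℝ) * ε ^ (T + 1 - K) * (1 - ε) ^ K := by
  unfold Phat
  rw [Finset.sum_Icc_succ_top hK]
  simp

/-- Key supermodularity inequality for `Phat`. -/
lemma Phat_key (ε : ℝ) (hε0 : 0 < ε) (hε1 : ε < 1) (a b T : ℕ)
    (ha : 1 ≤ a) (hab : a ≤ b) (hbT : b ≤ T) :
    Phat ε a (T + 1) * Phat ε b T ≤ Phat ε b (T + 1) * Phat ε a T := by
  have h0 : (0 : ℝ) ≤ 1 - ε := by linarith
  have hD : (T.choose (a - 1) : ℝ) * ε ^ (T + 1 - a) * (1 - ε) ^ a * Phat ε b T ≤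
      (T.choose (b - 1) : ℝ) * ε ^ (T + 1 - b) * (1 - ε) ^ b * Phat ε a T := by
    unfold Phat
    rw [Finset.mul_sum, Finset.mul_sum]
    have hterm : ∀ τ ∈ Finset.Icc b T,
        (T.choose (a - 1) : ℝ) * ε ^ (T + 1 - a) * (1 - ε) ^ a *
          (((τ - 1).choose (b - 1) : ℝ) * ε ^ (τ - b) * (1 - ε) ^ b) ≤
        (T.choose (b - 1) : ℝ) * ε ^ (T + 1 - b) * (1 - ε) ^ b *
          (((τ - 1).choose (a - 1) : ℝ) * ε ^ (τ - a) * (1 - ε) ^ a) := by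
      intro τ hτ
      simp only [Finset.mem_Icc] at hτ
      obtain ⟨hbτ, hτT⟩ := hτ
      have hexp : (T + 1 - a) + (τ - b) = (T + 1 - b) + (τ - a) := by omega
      have hc : (τ - 1).choose (b - 1) * T.choose (a - 1) ≤
          (τ - 1).choose (a - 1) * T.choose (b - 1) :=
        choose_chain (τ - 1) T (by omega) (a - 1) (b - 1) (by omega)
      have hcR : ((τ - 1).choose (b - 1) : ℝ) * (T.choose (a - 1) : ℝ) ≤
          ((τ - 1).choose (a - 1) : ℝ) * (T.choose (b - 1) : ℝ) := by
        exact_mod_cast hc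
      calc (T.choose (a - 1) : ℝ) * ε ^ (T + 1 - a) * (1 - ε) ^ a *
            (((τ - 1).choose (b - 1) : ℝ) * ε ^ (τ - b) * (1 - ε) ^ b)
          = ((τ - 1).choose (b - 1) : ℝ) * (T.choose (a - 1) : ℝ) *
              ε ^ ((T + 1 - a) + (τ - b)) * ((1 - ε) ^ a * (1 - ε) ^ b) := by
            rw [pow_add]; ring
        _ = ((τ - 1).choose (b - 1) : ℝ) * (T.choose (a - 1) : ℝ) *
              ε ^ ((T + 1 - b) + (τ - a)) * ((1 - ε) ^ a * (1 - ε) ^ b) := by rw [hexp]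
        _ ≤ ((τ - 1).choose (a - 1) : ℝ) * (T.choose (b - 1) : ℝ) *
              ε ^ ((T + 1 - b) + (τ - a)) * ((1 - ε) ^ a * (1 - ε) ^ b) := by
            apply mul_le_mul_of_nonneg_right (mul_le_mul_of_nonneg_right hcR (by positivity))
            positivity
        _ = (T.choose (b - 1) : ℝ) * ε ^ (T + 1 - b) * (1 - ε) ^ b *
              (((τ - 1).choose (a - 1) : ℝ) * ε ^ (τ - a) * (1 - ε) ^ a) := by
            rw [pow_add]; ring
    calc ∑ τ ∈ Finset.Icc b T,
          (T.choose (a - 1) : ℝ) * ε ^ (T + 1 - a) * (1 - ε) ^ a *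
            (((τ - 1).choose (b - 1) : ℝ) * ε ^ (τ - b) * (1 - ε) ^ b)
        ≤ ∑ τ ∈ Finset.Icc b T,
          (T.choose (b - 1) : ℝ) * ε ^ (T + 1 - b) * (1 - ε) ^ b *
            (((τ - 1).choose (a - 1) : ℝ) * ε ^ (τ - a) * (1 - ε) ^ a) :=
          Finset.sum_le_sum hterm
      _ ≤ ∑ τ ∈ Finset.Icc a T,
          (T.choose (b - 1) : ℝ) * ε ^ (T + 1 - b) * (1 - ε) ^ b *
            (((τ - 1).choose (a - 1) : ℝ) * ε ^ (τ - a) * (1 - ε) ^ a) := by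
          apply Finset.sum_le_sum_of_subset_of_nonneg
          · apply Finset.Icc_subset_Icc_left hab
          · intro τ _ _
            positivity
  rw [Phat_succ ε a T (by omega), Phat_succ ε b T (by omega)]
  nlinarith [hD]

/-- For `0 < ε < 1`, `N ≥ 1` and `T ≥ 1`, the greedy block size is
monotone in the remaining time: `K̂_T ≤ K̂_{T+1}`. -/
theorem greedy_monotone (ε : ℝ) (hε0 : 0 < ε) (hε1 : ε < 1) (N : ℕ) (hN : 1 ≤ N)
    (T : ℕ) (hT : 1 ≤ T) (Kh Kh' : ℕ)
    (h1 : IsGreedy ε N T Kh) (h2 : IsGreedy ε N (T + 1) Kh') :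
    Kh ≤ Kh' := by
  by_contra hcon
  push_neg at hcon
  obtain ⟨hKh_mem, hmax1, hleast1⟩ := h1
  obtain ⟨hKh'_mem, hmax2, _⟩ := h2
  simp only [Finset.mem_Icc] at hKh_mem hKh'_mem
  have ha1 : 1 ≤ Kh' := hKh'_mem.1
  have hbT : Kh ≤ T := hKh_mem.2
  have hmem_a : Kh' ∈ Finset.Icc 1 T := Finset.mem_Icc.mpr ⟨ha1, by omega⟩
  -- strict inequality at horizon T
  have hstrict : Rew ε N T Kh' < Rew ε N T Kh := by
    by_contra hge
    push_neg at hge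
    have hmaxa : ∀ K ∈ Finset.Icc 1 T, Rew ε N T K ≤ Rew ε N T Kh' :=
      fun K hK => le_trans (hmax1 K hK) hge
    have := hleast1 Kh' hmem_a hmaxa
    omega
  -- inequality at horizon T+1
  have hle2 : Rew ε N (T + 1) Kh ≤ Rew ε N (T + 1) Kh' :=
    hmax2 Kh (Finset.mem_Icc.mpr ⟨hKh_mem.1, by omega⟩)
  -- key inequality
  have hkey : Phat ε Kh' (T + 1) * Phat ε Kh T ≤ Phat ε Kh (T + 1) * Phat ε Kh' T :=
    Phat_key ε hε0 hε1 Kh' Kh T ha1 (le_of_lt hcon) hbT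
  have hkeyP : Pall ε N Kh' (T + 1) * Pall ε N Kh T ≤ Pall ε N Kh (T + 1) * Pall ε N Kh' T := by
    unfold Pall
    rw [← mul_pow, ← mul_pow]
    apply pow_le_pow_left₀
    · exact mul_nonneg (Phat_nonneg ε hε0 hε1 _ _) (Phat_nonneg ε hε0 hε1 _ _)
    · exact hkey
  have hPa : 0 < Pall ε N Kh' T := pow_pos (Phat_pos ε hε0 hε1 Kh' T (by omega)) N
  have hPb : 0 < Pall ε N Kh T := pow_pos (Phat_pos ε hε0 hε1 Kh T hbT) N
  have hPa' : 0 < Pall ε N Kh' (T + 1) := pow_pos (Phat_pos ε hε0 hε1 Kh' (T + 1) (by omega)) N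
  have hPb' : 0 < Pall ε N Kh (T + 1) := pow_pos (Phat_pos ε hε0 hε1 Kh (T + 1) (by omega)) N
  unfold Rew at hstrict hle2
  have hKa : (0 : ℝ) < (Kh' : ℝ) := by exact_mod_cast ha1
  nlinarith [mul_lt_mul_of_pos_right hstrict hPb',
    mul_le_mul_of_nonneg_right hle2 hPb.le,
    mul_le_mul_of_nonneg_left hkeyP hKa.le]
end

section
/- Fix integers t ≥ 2 and N ≥ 1, and define f(ε, t, N) = (1 − ε^t) − 2^{1/N} (1 − ε^t + t ε^t − t ε^{t−1}) for ε ∈ (0,1). Then there exists a unique ε*(t,N) ∈ (0,1) such that f(ε*(t,N), t, N) = 0; moreover f(ε, t, N) < 0 for all ε ∈ (0, ε*(t,N)) and f(ε, t, N) > 0 for all ε ∈ (ε*(t,N), 1). Equivalently, regarding R_t(1) = (1 − ε^t)^N and R_t(2) = 2 (1 − ε^t + t ε^t − t ε^{t−1})^N as functions of ε, one has R_t(1) < R_t(2) for ε below the threshold ε*(t,N) and R_t(1) > R_t(2) for ε above it. -/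
/-- The threshold function `f(ε, t, N) = (1 - ε^t) - 2^{1/N} (1 - ε^t + t ε^t - t ε^{t-1})`,
where `2^{1/N}` is the real `N`-th root of `2`. -/
noncomputable def fThresh (ε : ℝ) (t N : ℕ) : ℝ :=
  (1 - ε ^ t) - (2 : ℝ) ^ (1 / (N : ℝ)) * (1 - ε ^ t + (t : ℝ) * ε ^ t - (t : ℝ) * ε ^ (t - 1))

private lemma gNonneg (m : ℕ) (ε : ℝ) (h0 : 0 ≤ ε) (h1 : ε ≤ 1) :
    0 ≤ 1 - ε ^ (m + 2) + ((m : ℝ) + 2) * ε ^ (m + 2) - ((m : ℝ) + 2) * ε ^ (m + 1) := by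
  set S : ℝ := ∑ i ∈ Finset.range (m + 2), ε ^ i with hS
  have hsum : ((m : ℝ) + 2) * ε ^ (m + 1) ≤ S := by
    have : S = ∑ i ∈ Finset.range (m + 2), ε ^ i := hS
    calc ((m : ℝ) + 2) * ε ^ (m + 1) = ∑ _i ∈ Finset.range (m + 2), ε ^ (m + 1) := by
          rw [Finset.sum_const, Finset.card_range]; push_cast; ring
      _ ≤ S := by
          rw [hS]
          apply Finset.sum_le_sum
          intro i hi
          exact pow_le_pow_of_le_one h0 h1 (by simp at hi; omega)
  have hgeom : (1 - ε) * S = 1 - ε ^ (m + 2) := by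
    have := geom_sum_mul ε (m + 2)
    rw [hS]
    nlinarith [this]
  have hprod : 0 ≤ (1 - ε) * (S - ((m : ℝ) + 2) * ε ^ (m + 1)) :=
    mul_nonneg (by linarith) (by linarith)
  have key : (1 - ε) * (S - ((m : ℝ) + 2) * ε ^ (m + 1))
      = 1 - ε ^ (m + 2) + ((m : ℝ) + 2) * ε ^ (m + 2) - ((m : ℝ) + 2) * ε ^ (m + 1) := by
    have hp : ε * ε ^ (m + 1) = ε ^ (m + 2) := by ring
    linear_combination hgeom + ((m : ℝ) + 2) * hp
  linarith [key ▸ hprod]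

/-- Fix `t ≥ 2` and `N ≥ 1`. There is a unique `ε*(t,N) ∈ (0,1)` with
`f(ε*(t,N), t, N) = 0`; moreover `f(·,t,N) < 0` on `(0, ε*(t,N))` and `> 0` on
`(ε*(t,N), 1)`. Equivalently, `R_t(1) = (1-ε^t)^N < 2(1-ε^t+tε^t-tε^{t-1})^N = R_t(2)`
below the threshold and `R_t(1) > R_t(2)` above it. -/
theorem threshold_exists (t N : ℕ) (ht : 2 ≤ t) (hN : 1 ≤ N) :
    ∃ e : ℝ, e ∈ Set.Ioo (0 : ℝ) 1 ∧ fThresh e t N = 0 ∧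
      (∀ ε' ∈ Set.Ioo (0 : ℝ) 1, fThresh ε' t N = 0 → ε' = e) ∧
      (∀ ε' ∈ Set.Ioo (0 : ℝ) e, fThresh ε' t N < 0) ∧
      (∀ ε' ∈ Set.Ioo e (1 : ℝ), 0 < fThresh ε' t N) ∧
      (∀ ε' ∈ Set.Ioo (0 : ℝ) e,
        (1 - ε' ^ t) ^ N <
          2 * (1 - ε' ^ t + (t : ℝ) * ε' ^ t - (t : ℝ) * ε' ^ (t - 1)) ^ N) ∧
      (∀ ε' ∈ Set.Ioo e (1 : ℝ),
        2 * (1 - ε' ^ t + (t : ℝ) * ε' ^ t - (t : ℝ) * ε' ^ (t - 1)) ^ N <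
          (1 - ε' ^ t) ^ N) := by
  obtain ⟨m, rfl⟩ : ∃ m, t = m + 2 := ⟨t - 2, by omega⟩
  have hNpos : (0 : ℝ) < (N : ℝ) := by exact_mod_cast hN.trans_lt' (by norm_num)
  set c : ℝ := (2 : ℝ) ^ (1 / (N : ℝ)) with hc
  have hc1 : 1 < c := by
    rw [hc]
    exact (Real.one_lt_rpow_iff_of_pos (by norm_num)).mpr (Or.inl ⟨by norm_num, by positivity⟩)
  have hcpos : 0 < c := by linarith
  have hcN : c ^ N = 2 := by
    rw [hc, ← Real.rpow_natCast ((2 : ℝ) ^ (1 / (N : ℝ))) N, ← Real.rpow_mul (by norm_num)]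
    rw [one_div, inv_mul_cancel₀ (ne_of_gt hNpos), Real.rpow_one]
  set F : ℝ → ℝ := fun x =>
    (1 - x ^ (m + 2)) - c * (1 - x ^ (m + 2) + ((m : ℝ) + 2) * x ^ (m + 2)
      - ((m : ℝ) + 2) * x ^ (m + 1)) with hFdef
  have hF : ∀ x : ℝ, fThresh x (m + 2) N = F x := by
    intro x
    simp only [fThresh, hFdef, Nat.add_sub_cancel]
    push_cast
    ring
  have hderiv : ∀ x : ℝ, HasDerivAt F
      (((m : ℝ) + 2) * x ^ m * (c * ((m : ℝ) + 1) * (1 - x) - x)) x := by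
    intro x
    have h1 : HasDerivAt (fun x : ℝ => x ^ (m + 2)) (((m : ℝ) + 2) * x ^ (m + 1)) x := by
      simpa using hasDerivAt_pow (m + 2) x
    have h2 : HasDerivAt (fun x : ℝ => x ^ (m + 1)) (((m : ℝ) + 1) * x ^ m) x := by
      simpa using hasDerivAt_pow (m + 1) x
    have h3 := ((hasDerivAt_const x (1 : ℝ)).sub h1).sub
      (((((hasDerivAt_const x (1 : ℝ)).sub h1).add (h1.const_mul ((m : ℝ) + 2))).sub
        (h2.const_mul ((m : ℝ) + 2))).const_mul c)
    exact h3.congr_deriv (by ring)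
  set k : ℝ := c * ((m : ℝ) + 1) with hk
  have hkpos : 0 < k := by positivity
  set ε0 : ℝ := k / (1 + k) with hε0
  have hε0pos : 0 < ε0 := by positivity
  have hε0lt1 : ε0 < 1 := by
    rw [hε0, div_lt_one (by linarith)]; linarith
  have hcontF : Continuous F := by fun_prop
  have hmono : StrictMonoOn F (Set.Icc 0 ε0) := by
    apply strictMonoOn_of_deriv_pos (convex_Icc _ _) hcontF.continuousOn
    intro x hx
    rw [interior_Icc] at hx
    rw [(hderiv x).deriv]
    have hx2 : x * (1 + k) < k := (lt_div_iff₀ (by linarith)).mp hx.2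
    have : 0 < c * ((m : ℝ) + 1) * (1 - x) - x := by
      rw [← hk]; nlinarith
    have hxm : (0 : ℝ) < x ^ m := pow_pos hx.1 m
    positivity
  have hanti : StrictAntiOn F (Set.Icc ε0 1) := by
    apply strictAntiOn_of_deriv_neg (convex_Icc _ _) hcontF.continuousOn
    intro x hx
    rw [interior_Icc] at hx
    rw [(hderiv x).deriv]
    have hx1 : 0 < x := lt_trans hε0pos hx.1
    have hx2 : k < x * (1 + k) := (div_lt_iff₀ (by linarith)).mp hx.1
    have hneg : c * ((m : ℝ) + 1) * (1 - x) - x < 0 := by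
      rw [← hk]; nlinarith
    have hxm : (0 : ℝ) < x ^ m := pow_pos hx1 m
    exact mul_neg_of_pos_of_neg (by positivity) hneg
  have hF0 : F 0 = 1 - c := by simp [hFdef]
  have hF1 : F 1 = 0 := by simp [hFdef]
  have hFε0 : 0 < F ε0 := by
    have := hanti (Set.left_mem_Icc.mpr hε0lt1.le) (Set.right_mem_Icc.mpr hε0lt1.le) hε0lt1
    rw [hF1] at this
    exact this
  have hivt := intermediate_value_Ioo hε0pos.le (hcontF.continuousOn (s := Set.Icc 0 ε0))
  obtain ⟨e, he, hFe⟩ := hivt (show (0 : ℝ) ∈ Set.Ioo (F 0) (F ε0) from ⟨by rw [hF0]; linarith, hFε0⟩)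
  have he01 : e ∈ Set.Ioo (0 : ℝ) 1 := ⟨he.1, he.2.trans hε0lt1⟩
  -- sign lemmas
  have hneg : ∀ x ∈ Set.Ioo (0 : ℝ) e, F x < 0 := by
    intro x hx
    have := hmono (Set.mem_Icc.mpr ⟨hx.1.le, le_of_lt (hx.2.trans he.2)⟩)
      (Set.mem_Icc.mpr ⟨he.1.le, he.2.le⟩) hx.2
    rw [hFe] at this; exact this
  have hpos : ∀ x ∈ Set.Ioo e (1 : ℝ), 0 < F x := by
    intro x hx
    rcases le_or_gt x ε0 with hle | hgt
    · have := hmono (Set.mem_Icc.mpr ⟨he.1.le, he.2.le⟩)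
        (Set.mem_Icc.mpr ⟨(he.1.trans hx.1).le, hle⟩) hx.1
      rw [hFe] at this; exact this
    · have := hanti (Set.mem_Icc.mpr ⟨hgt.le, hx.2.le⟩)
        (Set.right_mem_Icc.mpr hε0lt1.le) hx.2
      rw [hF1] at this; exact this
  have hNne : N ≠ 0 := by omega
  refine ⟨e, he01, by rw [hF]; exact hFe, ?_, ?_, ?_, ?_, ?_⟩
  · intro ε' hε' h0
    rw [hF] at h0
    rcases lt_trichotomy ε' e with h | h | h
    · exact absurd h0 (ne_of_lt (hneg ε' ⟨hε'.1, h⟩))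
    · exact h
    · exact absurd h0.symm (ne_of_lt (hpos ε' ⟨h, hε'.2⟩))
  · intro ε' hε'; rw [hF]; exact hneg ε' hε'
  · intro ε' hε'; rw [hF]; exact hpos ε' hε'
  · intro ε' hε'
    have h := hneg ε' hε'
    rw [← hF] at h
    simp only [fThresh, ← hc] at h
    have h1 : (0 : ℝ) ≤ 1 - ε' ^ (m + 2) := by
      have : ε' ^ (m + 2) ≤ 1 := pow_le_one₀ hε'.1.le (le_of_lt (hε'.2.trans he01.2))
      linarith
    have hlt : 1 - ε' ^ (m + 2) < c * (1 - ε' ^ (m + 2) + ((m + 2 : ℕ) : ℝ) * ε' ^ (m + 2)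
        - ((m + 2 : ℕ) : ℝ) * ε' ^ (m + 2 - 1)) := by linarith
    have := pow_lt_pow_left₀ hlt h1 hNne
    rw [mul_pow, hcN] at this
    exact this
  · intro ε' hε'
    have h := hpos ε' hε'
    rw [← hF] at h
    simp only [fThresh, ← hc] at h
    have hε'0 : 0 ≤ ε' := (he01.1.trans hε'.1).le
    have hg : 0 ≤ 1 - ε' ^ (m + 2) + ((m + 2 : ℕ) : ℝ) * ε' ^ (m + 2)
        - ((m + 2 : ℕ) : ℝ) * ε' ^ (m + 2 - 1) := by
      have h2 := gNonneg m ε' hε'0 hε'.2.le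
      push_cast
      exact h2
    have hcg : 0 ≤ c * (1 - ε' ^ (m + 2) + ((m + 2 : ℕ) : ℝ) * ε' ^ (m + 2)
        - ((m + 2 : ℕ) : ℝ) * ε' ^ (m + 2 - 1)) := mul_nonneg hcpos.le hg
    have hlt : c * (1 - ε' ^ (m + 2) + ((m + 2 : ℕ) : ℝ) * ε' ^ (m + 2)
        - ((m + 2 : ℕ) : ℝ) * ε' ^ (m + 2 - 1)) < 1 - ε' ^ (m + 2) := by linarith
    have := pow_lt_pow_left₀ hlt hcg hNne
    rw [mul_pow, hcN] at this
    exact this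
end

section
/- Let ε ∈ (0,1), N ≥ 1, and let t ≥ 2 be an integer. If R_t(1) > R_t(2), then the optimal policy is plain retransmission for all remaining slots: K*_j = 1 for every j ∈ {1, …, t}. -/
open Finset

/-- auxiliary: `q ε 0 T = 1`, otherwise `Phat`. -/
noncomputable def q (ε : ℝ) (K T : ℕ) : ℝ := if K = 0 then 1 else Phat ε K T

lemma q_zero (ε : ℝ) (T : ℕ) : q ε 0 T = 1 := by simp [q]

lemma q_eq_phat (ε : ℝ) {K : ℕ} (hK : 1 ≤ K) (T : ℕ) : q ε K T = Phat ε K T := by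
  simp [q, Nat.one_le_iff_ne_zero.mp hK]

lemma sum_Icc_range (f : ℕ → ℝ) (K T : ℕ) :
    ∑ τ ∈ Icc K T, f τ = ∑ i ∈ range (T+1-K), f (K+i) := by
  rw [← Finset.Ico_add_one_right_eq_Icc, Finset.sum_Ico_eq_sum_range]

lemma phat_range (ε : ℝ) (K T : ℕ) :
    Phat ε K T = ∑ i ∈ range (T+1-K), ((K+i-1).choose (K-1) : ℝ) * ε ^ (K+i-K) * (1-ε)^K := by
  rw [Phat, sum_Icc_range]

lemma q_zero_T (ε : ℝ) {K : ℕ} (hK : 1 ≤ K) : q ε K 0 = 0 := by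
  rw [q_eq_phat ε hK, Phat, Finset.Icc_eq_empty (by omega), Finset.sum_empty]

lemma phat_one (ε : ℝ) (T : ℕ) : Phat ε 1 T = 1 - ε ^ T := by
  induction T with
  | zero => rw [Phat, Finset.Icc_eq_empty (by omega), Finset.sum_empty]; simp
  | succ T ih =>
    have h : Phat ε 1 (T+1) = Phat ε 1 T + ((T+1-1).choose 0 : ℝ) * ε ^ (T+1-1) * (1-ε)^1 := by
      rw [Phat, Phat, ← Finset.sum_Icc_succ_top (by omega : 1 ≤ T+1)]
    rw [h, ih]
    simp [pow_succ]
    ring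


lemma phat_rec2 (ε : ℝ) {K : ℕ} (hK : 2 ≤ K) (T : ℕ) :
    Phat ε K (T+1) = ε * Phat ε K T + (1-ε) * Phat ε (K-1) T := by
  obtain ⟨m, rfl⟩ : ∃ m, K = m + 2 := ⟨K - 2, by omega⟩
  rw [Phat, Phat, Phat, sum_Icc_range, sum_Icc_range, sum_Icc_range, Finset.mul_sum, Finset.mul_sum]
  have e1 : T + 1 + 1 - (m+2) = T - m := by omega
  have e2 : T + 1 - (m+2) = T - m - 1 := by omega
  have e3 : T + 1 - (m+2-1) = T - m := by omega
  rw [e1, e2, e3]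
  have hL : ∀ i : ℕ, ((m+2+i-1).choose (m+2-1) : ℝ) * ε ^ (m+2+i-(m+2)) * (1-ε)^(m+2)
      = ((m+i).choose m : ℝ) * ε ^ i * (1-ε)^(m+2)
        + ((m+i).choose (m+1) : ℝ) * ε ^ i * (1-ε)^(m+2) := by
    intro i
    have h1 : m+2+i-1 = (m+i) + 1 := by omega
    have h2 : m+2-1 = m + 1 := by omega
    have h3 : m+2+i-(m+2) = i := by omega
    rw [h1, h2, h3, Nat.choose_succ_succ]
    push_cast; ring
  rw [Finset.sum_congr rfl (fun i _ => hL i), Finset.sum_add_distrib]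
  have hS : ∑ i ∈ range (T-m), ((m+i).choose m : ℝ) * ε ^ i * (1-ε)^(m+2)
      = ∑ i ∈ range (T-m), (1-ε) * (((m+2-1+i-1).choose (m+2-1-1) : ℝ) * ε ^ (m+2-1+i-(m+2-1)) * (1-ε)^(m+2-1)) := by
    refine Finset.sum_congr rfl fun i _ => ?_
    have h1 : m+2-1+i-1 = m+i := by omega
    have h2 : m+2-1-1 = m := by omega
    have h3 : m+2-1+i-(m+2-1) = i := by omega
    have h4 : m+2-1 = m+1 := by omega
    rw [h1, h2, h3, h4]
    have h5 : (m:ℕ)+2 = (m+1)+1 := by omega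
    rw [h5, pow_succ]
    ring
  have hE : ∑ i ∈ range (T-m), ((m+i).choose (m+1) : ℝ) * ε ^ i * (1-ε)^(m+2)
      = ∑ i ∈ range (T-m-1), ε * (((m+2+i-1).choose (m+2-1) : ℝ) * ε ^ (m+2+i-(m+2)) * (1-ε)^(m+2)) := by
    rcases Nat.eq_zero_or_pos (T-m) with h | h
    · rw [h]; simp
    · obtain ⟨k, hk⟩ : ∃ k, T - m = k + 1 := ⟨T-m-1, by omega⟩
      rw [hk, Finset.sum_range_succ']
      have h0 : ((m+0).choose (m+1) : ℝ) * ε ^ 0 * (1-ε)^(m+2) = 0 := by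
        simp [Nat.choose_succ_self]
      rw [h0, add_zero]
      have hk' : k + 1 - 1 = k := by omega
      rw [hk']
      refine Finset.sum_congr rfl fun i _ => ?_
      have h1 : m+2+i-1 = m+(i+1) := by omega
      have h2 : m+2-1 = m+1 := by omega
      have h3 : m+2+i-(m+2) = i := by omega
      rw [h1, h2, h3, pow_succ]
      ring
  rw [hS, hE]
  ring

section qlems
variable {ε : ℝ} (hε0 : 0 < ε) (hε1 : ε < 1)

lemma q_rec (ε : ℝ) {K : ℕ} (hK : 1 ≤ K) (T : ℕ) :
    q ε K (T+1) = ε * q ε K T + (1-ε) * q ε (K-1) T := by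
  rcases eq_or_lt_of_le hK with h | h
  · rw [← h]
    simp only [q_eq_phat ε (le_refl 1), phat_one]
    norm_num [q_zero]
    ring
  · have h2 : 2 ≤ K := h
    rw [q_eq_phat ε hK, q_eq_phat ε hK, q_eq_phat ε (by omega : 1 ≤ K - 1), phat_rec2 ε h2]

include hε0 hε1 in
lemma q_nonneg (K T : ℕ) : 0 ≤ q ε K T := by
  rcases Nat.eq_zero_or_pos K with h | h
  · rw [h, q_zero]; norm_num
  · rw [q_eq_phat ε h, Phat]
    refine Finset.sum_nonneg fun τ _ => ?_
    have h1 := hε0.le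
    have h2 : (0:ℝ) ≤ 1 - ε := by linarith
    positivity

include hε0 hε1 in
lemma q_mono (K T : ℕ) : q ε K T ≤ q ε K (T+1) := by
  rcases Nat.eq_zero_or_pos K with h | h
  · rw [h, q_zero, q_zero]
  · rw [q_eq_phat ε h, q_eq_phat ε h]
    rcases le_or_gt K (T+1) with h2 | h2
    · rw [Phat, Phat, Finset.sum_Icc_succ_top h2]
      have : (0:ℝ) ≤ ((T+1-1).choose (K-1) : ℝ) * ε ^ (T+1-K) * (1-ε)^K := by
        have ha := hε0.le
        have hb : (0:ℝ) ≤ 1 - ε := by linarith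
        positivity
      linarith
    · rw [Phat, Phat, Finset.Icc_eq_empty (by omega), Finset.Icc_eq_empty (by omega)]

include hε0 hε1 in
lemma q_mono' (K : ℕ) {T T' : ℕ} (h : T ≤ T') : q ε K T ≤ q ε K T' := by
  induction T' with
  | zero => rw [Nat.le_zero.mp h]
  | succ T' ih =>
    rcases Nat.lt_or_ge T (T'+1) with h2 | h2
    · exact le_trans (ih (by omega)) (q_mono hε0 hε1 K T')
    · rw [Nat.le_antisymm h h2]

include hε0 hε1 in
lemma q_le_one (K T : ℕ) : q ε K T ≤ 1 := by
  induction T generalizing K with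
  | zero =>
    rcases Nat.eq_zero_or_pos K with h | h
    · rw [h, q_zero]
    · rw [q_zero_T ε h]; norm_num
  | succ T ih =>
    rcases Nat.eq_zero_or_pos K with h | h
    · rw [h, q_zero]
    · rw [q_rec ε h]
      nlinarith [ih K, ih (K-1), q_nonneg hε0 hε1 K T, q_nonneg hε0 hε1 (K-1) T]

include hε0 hε1 in
lemma q_split (a b T : ℕ) : q ε (a+b) T ≤ q ε a T * q ε b T := by
  induction T generalizing a b with
  | zero =>
    rcases Nat.eq_zero_or_pos (a+b) with h | h
    · have ha : a = 0 := by omega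
      have hb : b = 0 := by omega
      simp [ha, hb, q_zero]
    · rw [q_zero_T ε h]
      exact mul_nonneg (q_nonneg hε0 hε1 a 0) (q_nonneg hε0 hε1 b 0)
  | succ T ih =>
    rcases Nat.eq_zero_or_pos a with ha | ha
    · rw [ha, q_zero, zero_add, one_mul]
    · have hab : 1 ≤ a + b := by omega
      rw [q_rec ε hab, q_rec ε ha]
      have h1 : a + b - 1 = (a-1) + b := by omega
      rw [h1]
      have i1 := ih a b
      have i2 := ih (a-1) b
      have hqb := q_mono hε0 hε1 b T
      have h0 : 0 ≤ q ε a (T+1) := q_nonneg hε0 hε1 a (T+1)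
      have hb0 := q_nonneg hε0 hε1 b T
      have ha0 := q_nonneg hε0 hε1 a T
      have ha1 := q_nonneg hε0 hε1 (a-1) T
      have hrec : q ε a (T+1) = ε * q ε a T + (1-ε) * q ε (a-1) T := q_rec ε ha T
      nlinarith [mul_le_mul_of_nonneg_left hqb h0]

end qlems

section core
variable {ε : ℝ} (hε0 : 0 < ε) (hε1 : ε < 1)

include hε0 hε1 in
lemma q_cprime (K T : ℕ) : q ε (K+2) T * q ε 1 T ≤ q ε (K+1) T * q ε 2 T := by
  induction T with
  | zero =>
    rw [q_zero_T ε (by omega : 1 ≤ K+2), zero_mul]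
    exact mul_nonneg (q_nonneg hε0 hε1 (K+1) 0) (q_nonneg hε0 hε1 2 0)
  | succ T ih =>
    have rA : q ε (K+2) (T+1) = ε * q ε (K+2) T + (1-ε) * q ε (K+1) T := by
      have := q_rec ε (by omega : 1 ≤ K+2) T; simpa using this
    have rB : q ε (K+1) (T+1) = ε * q ε (K+1) T + (1-ε) * q ε K T := by
      have := q_rec ε (by omega : 1 ≤ K+1) T; simpa using this
    have r1 : q ε 1 (T+1) = ε * q ε 1 T + (1-ε) * 1 := by
      have := q_rec ε (le_refl 1) T; simpa [q_zero] using this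
    have r2 : q ε 2 (T+1) = ε * q ε 2 T + (1-ε) * q ε 1 T := by
      have := q_rec ε (by omega : 1 ≤ 2) T; simpa using this
    have s1 : q ε (K+2) T ≤ q ε K T * q ε 2 T := q_split hε0 hε1 K 2 T
    have s2 : q ε (K+1) T ≤ q ε K T * q ε 1 T := q_split hε0 hε1 K 1 T
    have h1 : (0:ℝ) < 1 - ε := by linarith
    have g1 : ε*ε*(q ε (K+2) T * q ε 1 T) ≤ ε*ε*(q ε (K+1) T * q ε 2 T) :=
      mul_le_mul_of_nonneg_left ih (by positivity)
    have g2 : ε*(1-ε)*(q ε (K+2) T) ≤ ε*(1-ε)*(q ε K T * q ε 2 T) :=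
      mul_le_mul_of_nonneg_left s1 (by positivity)
    have g3 : (1-ε)*(1-ε)*(q ε (K+1) T) ≤ (1-ε)*(1-ε)*(q ε K T * q ε 1 T) :=
      mul_le_mul_of_nonneg_left s2 (by positivity)
    rw [rA, rB, r1, r2]
    nlinarith [g1, g2, g3]

include hε0 hε1 in
lemma q_cpow (K T : ℕ) : q ε (K+2) T * (q ε 1 T)^K ≤ (q ε 2 T)^(K+1) := by
  induction K with
  | zero => simpa using le_refl (q ε 2 T)
  | succ K ih =>
    have h1 := q_cprime hε0 hε1 (K+1) T
    have hq1 := q_nonneg hε0 hε1 1 T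
    have hq2 := q_nonneg hε0 hε1 2 T
    have hqK2 := q_nonneg hε0 hε1 (K+2) T
    have hpow : (0:ℝ) ≤ (q ε 1 T)^K := pow_nonneg hq1 K
    calc q ε (K+1+2) T * (q ε 1 T)^(K+1)
        = (q ε (K+3) T * q ε 1 T) * (q ε 1 T)^K := by ring
      _ ≤ (q ε (K+2) T * q ε 2 T) * (q ε 1 T)^K := by
          exact mul_le_mul_of_nonneg_right (by simpa using h1) hpow
      _ = q ε 2 T * (q ε (K+2) T * (q ε 1 T)^K) := by ring
      _ ≤ q ε 2 T * (q ε 2 T)^(K+1) := mul_le_mul_of_nonneg_left ih hq2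
      _ = (q ε 2 T)^(K+1+1) := by ring

include hε0 hε1 in
lemma q_one_eq (T : ℕ) : q ε 1 T = 1 - ε ^ T := by
  rw [q_eq_phat ε (le_refl 1), phat_one]

include hε0 hε1 in
lemma q_one_pos {T : ℕ} (hT : 1 ≤ T) : 0 < q ε 1 T := by
  rw [q_one_eq hε0 hε1]
  have : ε ^ T < 1 := pow_lt_one₀ hε0.le hε1 (by omega)
  linarith

include hε0 hε1 in
lemma q_cross (T n : ℕ) : q ε 2 T * q ε 1 (T+n) ≤ q ε 2 (T+n) * q ε 1 T := by
  induction n with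
  | zero => simp
  | succ n ih =>
    have step : q ε 2 (T+n) * q ε 1 (T+n+1) ≤ q ε 2 (T+n+1) * q ε 1 (T+n) := by
      have r1 : q ε 1 (T+n+1) = ε * q ε 1 (T+n) + (1-ε) * 1 := by
        have := q_rec ε (le_refl 1) (T+n); simpa [q_zero] using this
      have r2 : q ε 2 (T+n+1) = ε * q ε 2 (T+n) + (1-ε) * q ε 1 (T+n) := by
        have := q_rec ε (by omega : 1 ≤ 2) (T+n); simpa using this
      have hsp : q ε 2 (T+n) ≤ q ε 1 (T+n) * q ε 1 (T+n) := by
        have := q_split hε0 hε1 1 1 (T+n); simpa using this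
      have h1 : (0:ℝ) < 1 - ε := by linarith
      rw [r1, r2]; nlinarith
    rcases Nat.eq_zero_or_pos (T+n) with h0 | h0
    · have hT : T = 0 := by omega
      have hn : n = 0 := by omega
      subst hT; subst hn
      rw [q_zero_T ε (by omega : 1 ≤ 2), zero_mul]
      have := q_nonneg hε0 hε1 2 1
      have := q_nonneg hε0 hε1 1 0
      nlinarith
    · have hpos : 0 < q ε 1 (T+n) := q_one_pos hε0 hε1 h0
      have h1 : q ε 2 T * q ε 1 (T+n+1) * q ε 1 (T+n)
          ≤ q ε 2 (T+n+1) * q ε 1 T * q ε 1 (T+n) := by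
        have a1 : q ε 2 T * q ε 1 (T+n+1) * q ε 1 (T+n)
            = (q ε 2 T * q ε 1 (T+n)) * q ε 1 (T+n+1) := by ring
        have a2 : (q ε 2 T * q ε 1 (T+n)) * q ε 1 (T+n+1)
            ≤ (q ε 2 (T+n) * q ε 1 T) * q ε 1 (T+n+1) := by
          have := q_nonneg hε0 hε1 1 (T+n+1)
          exact mul_le_mul_of_nonneg_right ih this
        have a3 : (q ε 2 (T+n) * q ε 1 T) * q ε 1 (T+n+1)
            ≤ (q ε 2 (T+n+1) * q ε 1 (T+n)) * q ε 1 T := by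
          have hq1T := q_nonneg hε0 hε1 1 T
          calc (q ε 2 (T+n) * q ε 1 T) * q ε 1 (T+n+1)
              = (q ε 2 (T+n) * q ε 1 (T+n+1)) * q ε 1 T := by ring
            _ ≤ (q ε 2 (T+n+1) * q ε 1 (T+n)) * q ε 1 T :=
                mul_le_mul_of_nonneg_right step hq1T
        calc q ε 2 T * q ε 1 (T+n+1) * q ε 1 (T+n) = (q ε 2 T * q ε 1 (T+n)) * q ε 1 (T+n+1) := a1
          _ ≤ (q ε 2 (T+n) * q ε 1 T) * q ε 1 (T+n+1) := a2
          _ ≤ (q ε 2 (T+n+1) * q ε 1 (T+n)) * q ε 1 T := a3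
          _ = q ε 2 (T+n+1) * q ε 1 T * q ε 1 (T+n) := by ring
      exact le_of_mul_le_mul_right h1 hpos
end core

section star
variable {ε : ℝ} (hε0 : 0 < ε) (hε1 : ε < 1)

include hε0 hε1 in
lemma q_star {N t : ℕ} (hyp : 2*(q ε 2 t)^N < (q ε 1 t)^N)
    {K j : ℕ} (hK : 2 ≤ K) (hKj : K ≤ j) (hjt : j ≤ t) :
    (K:ℝ) * (q ε K j)^N ≤ (q ε 1 j)^N := by
  have hj1 : 1 ≤ j := by omega
  have ht1 : 1 ≤ t := by omega
  set a := q ε 1 j with ha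
  set b := q ε 2 j with hb
  set c := q ε K j with hc
  have ha0 : 0 < a := q_one_pos hε0 hε1 hj1
  have hb0 : 0 ≤ b := q_nonneg hε0 hε1 2 j
  have hc0 : 0 ≤ c := q_nonneg hε0 hε1 K j
  have hq1t : 0 < q ε 1 t := q_one_pos hε0 hε1 ht1
  have hq2t : 0 ≤ q ε 2 t := q_nonneg hε0 hε1 2 t
  -- step 1 : 2 * b^N ≤ a^N
  have cross : b * q ε 1 t ≤ q ε 2 t * a := by
    have := q_cross hε0 hε1 j (t - j)
    rwa [show j + (t-j) = t by omega] at this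
  have crossN : b^N * (q ε 1 t)^N ≤ (q ε 2 t)^N * a^N := by
    have h := pow_le_pow_left₀ (by positivity) cross N
    rwa [mul_pow, mul_pow] at h
  have step1 : 2 * b^N ≤ a^N := by
    have hAN : 0 < (q ε 1 t)^N := by positivity
    have h2 : 2 * (b^N * (q ε 1 t)^N) ≤ 2 * ((q ε 2 t)^N * a^N) := by linarith
    have h3 : 2 * ((q ε 2 t)^N * a^N) ≤ (q ε 1 t)^N * a^N := by
      have haN : (0:ℝ) ≤ a^N := by positivity
      nlinarith
    have h4 : (2 * b^N) * (q ε 1 t)^N ≤ a^N * (q ε 1 t)^N := by nlinarith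
    exact le_of_mul_le_mul_right h4 hAN
  -- step 2 : c * a^(K-2) ≤ b^(K-1)
  have step2 : c * a^(K-2) ≤ b^(K-1) := by
    have h := q_cpow hε0 hε1 (K-2) j
    rw [show K-2+2 = K by omega] at h
    rw [show K-1 = (K-2)+1 by omega]
    exact h
  -- step 3
  have step2N : c^N * (a^N)^(K-2) ≤ (b^N)^(K-1) := by
    have h := pow_le_pow_left₀ (by positivity) step2 N
    rwa [mul_pow, ← pow_mul, ← pow_mul, mul_comm (K-2) N, mul_comm (K-1) N,
      pow_mul, pow_mul] at h
  have hKpow : (K:ℝ) ≤ 2^(K-1) := by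
    have h : K ≤ 2^(K-1) := by
      have := Nat.lt_two_pow_self (n := K-1)
      omega
    calc (K:ℝ) ≤ ((2^(K-1) : ℕ) : ℝ) := by exact_mod_cast h
      _ = 2^(K-1) := by push_cast; ring
  have hbN : (0:ℝ) ≤ b^N := by positivity
  have hpows : (2*b^N)^(K-1) ≤ (a^N)^(K-1) := pow_le_pow_left₀ (by positivity) step1 (K-1)
  have main : (K:ℝ) * c^N * (a^N)^(K-2) ≤ a^N * (a^N)^(K-2) := by
    have hK0 : (0:ℝ) ≤ K := by positivity
    calc (K:ℝ) * c^N * (a^N)^(K-2) ≤ (K:ℝ) * (b^N)^(K-1) := by nlinarith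
      _ ≤ 2^(K-1) * (b^N)^(K-1) := by
          have : (0:ℝ) ≤ (b^N)^(K-1) := by positivity
          nlinarith
      _ = (2*b^N)^(K-1) := by rw [mul_pow]
      _ ≤ (a^N)^(K-1) := hpows
      _ = a^N * (a^N)^(K-2) := by rw [show K-1 = (K-2)+1 by omega]; ring
  have hcan : (0:ℝ) < (a^N)^(K-2) := by positivity
  exact le_of_mul_le_mul_right main hcan
end star


/-- Right-hand side of the Bellman recursion for the block-size-adaptation MDP:
`R_t(K) + ∑_{j=0}^{t-K} (P(K, t-j) - P(K, t-j-1)) · V(j)`. -/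
noncomputable def bellmanRHS (ε : ℝ) (N : ℕ) (V : ℕ → ℝ) (t K : ℕ) : ℝ :=
  Rew ε N t K +
    ∑ j ∈ Finset.range (t - K + 1), (Pall ε N K (t - j) - Pall ε N K (t - j - 1)) * V j

section mdp
variable {ε : ℝ} (hε0 : 0 < ε) (hε1 : ε < 1) {N : ℕ} (hN : 1 ≤ N)

lemma pall_eq_q {K : ℕ} (hK : 1 ≤ K) (T : ℕ) : Pall ε N K T = (q ε K T)^N := by
  rw [Pall, q_eq_phat ε hK]

lemma q_eq_zero (ε : ℝ) {K T : ℕ} (hK : 1 ≤ K) (hTK : T < K) : q ε K T = 0 := by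
  rw [q_eq_phat ε hK, Phat, Finset.Icc_eq_empty (by omega), Finset.sum_empty]

include hN in
lemma pall_zero {K T : ℕ} (hK : 1 ≤ K) (hTK : T < K) : Pall ε N K T = 0 := by
  rw [pall_eq_q hK, q_eq_zero ε hK hTK, zero_pow (by omega)]

include hε0 hε1 in
lemma pall_nonneg (K T : ℕ) (hK : 1 ≤ K) : 0 ≤ Pall ε N K T := by
  rw [pall_eq_q hK]; exact pow_nonneg (q_nonneg hε0 hε1 K T) N

include hε0 hε1 in
lemma pall_mono {K : ℕ} (hK : 1 ≤ K) {T T' : ℕ} (h : T ≤ T') :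
    Pall ε N K T ≤ Pall ε N K T' := by
  rw [pall_eq_q hK, pall_eq_q hK]
  exact pow_le_pow_left₀ (q_nonneg hε0 hε1 K T) (q_mono' hε0 hε1 K h) N

include hε0 hε1 in
lemma q_le_q_one {K : ℕ} (hK : 1 ≤ K) (T : ℕ) : q ε K T ≤ q ε 1 T := by
  have h := q_split hε0 hε1 (K-1) 1 T
  rw [show K-1+1 = K by omega] at h
  calc q ε K T ≤ q ε (K-1) T * q ε 1 T := h
    _ ≤ 1 * q ε 1 T :=
        mul_le_mul_of_nonneg_right (q_le_one hε0 hε1 (K-1) T) (q_nonneg hε0 hε1 1 T)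
    _ = q ε 1 T := one_mul _

include hε0 hε1 in
lemma pall_le_pall_one {K : ℕ} (hK : 1 ≤ K) (T : ℕ) :
    Pall ε N K T ≤ Pall ε N 1 T := by
  rw [pall_eq_q hK, pall_eq_q (le_refl 1)]
  exact pow_le_pow_left₀ (q_nonneg hε0 hε1 K T) (q_le_q_one hε0 hε1 hK T) N

end mdp

section cmp
variable {ε : ℝ} (hε0 : 0 < ε) (hε1 : ε < 1) {N : ℕ} (hN : 1 ≤ N)

include hε0 hε1 hN in
/-- Key comparison: block size `K ≥ 2` is dominated by block size `1`. -/
lemma rhs_le {t : ℕ} (hyp : 2*(q ε 2 t)^N < (q ε 1 t)^N)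
    (V : ℕ → ℝ) (hV0 : V 0 = 0) {j K : ℕ} (hK2 : 2 ≤ K) (hKj : K ≤ j) (hjt : j ≤ t)
    (hmono : ∀ i, 1 ≤ i → i ≤ j-1 → V (i-1) ≤ V i) :
    bellmanRHS ε N V j K ≤ bellmanRHS ε N V j 1 := by
  have hj1 : 1 ≤ j := by omega
  -- extend the K-sum to `range j`
  have hext : ∑ i ∈ Finset.range (j - K + 1), (Pall ε N K (j-i) - Pall ε N K (j-i-1)) * V i
      = ∑ i ∈ Finset.range j, (Pall ε N K (j-i) - Pall ε N K (j-i-1)) * V i := by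
    refine Finset.sum_subset (Finset.range_subset_range.mpr (by omega)) ?_
    intro i hi hni
    rw [Finset.mem_range] at hi hni
    have h1 : Pall ε N K (j-i) = 0 := pall_zero hN (by omega) (by omega)
    have h2 : Pall ε N K (j-i-1) = 0 := pall_zero hN (by omega) (by omega)
    rw [h1, h2, sub_zero, zero_mul]
  rw [bellmanRHS, bellmanRHS, hext, show j - 1 + 1 = j by omega]
  -- immediate reward comparison
  have hrew : Rew ε N j K ≤ Rew ε N j 1 := by
    rw [Rew, Rew, pall_eq_q (by omega : 1 ≤ K), pall_eq_q (le_refl 1)]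
    have := q_star hε0 hε1 hyp hK2 hKj hjt
    push_cast
    linarith
  -- continuation comparison via Abel summation
  set F : ℕ → ℝ := fun m => Pall ε N 1 m - Pall ε N K m with hF
  have hF0 : F 0 = 0 := by
    rw [hF]
    simp only
    rw [pall_zero hN (le_refl 1) (by omega), pall_zero hN (by omega : 1 ≤ K) (by omega), sub_zero]
  have hFnn : ∀ m, 0 ≤ F m := fun m => by
    rw [hF]; simp only
    have := pall_le_pall_one hε0 hε1 (N := N) (by omega : 1 ≤ K) m
    linarith
  have hsum : ∑ i ∈ Finset.range j, (Pall ε N K (j-i) - Pall ε N K (j-i-1)) * V i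
      ≤ ∑ i ∈ Finset.range j, (Pall ε N 1 (j-i) - Pall ε N 1 (j-i-1)) * V i := by
    have key : ∑ i ∈ Finset.range j, (Pall ε N 1 (j-i) - Pall ε N 1 (j-i-1)) * V i
        - ∑ i ∈ Finset.range j, (Pall ε N K (j-i) - Pall ε N K (j-i-1)) * V i
        = (∑ i ∈ Finset.range j, F (j-i) * V i) - ∑ i ∈ Finset.range j, F (j-i-1) * V i := by
      rw [← Finset.sum_sub_distrib, ← Finset.sum_sub_distrib]
      refine Finset.sum_congr rfl fun i _ => ?_
      rw [hF]; simp only; ring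
    have hS1 : ∑ i ∈ Finset.range j, F (j-i) * V i
        = (∑ i ∈ Finset.range (j-1), F (j-(i+1)) * V (i+1)) + F j * V 0 := by
      rw [show j = (j-1)+1 by omega, Finset.sum_range_succ' (fun i => F ((j-1)+1-i) * V i) (j-1)]
      simp only [Nat.sub_zero]
      rw [show (j-1)+1 = j by omega]
    have hS2 : ∑ i ∈ Finset.range j, F (j-i-1) * V i
        = (∑ i ∈ Finset.range (j-1), F (j-i-1) * V i) + F (j-(j-1)-1) * V (j-1) := by
      rw [show j = (j-1)+1 by omega, Finset.sum_range_succ (fun i => F ((j-1)+1-i-1) * V i) (j-1)]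
      rw [show (j-1)+1 = j by omega]
    have hlast : F (j-(j-1)-1) = 0 := by rw [show j-(j-1)-1 = 0 by omega, hF0]
    have hnn : 0 ≤ (∑ i ∈ Finset.range j, F (j-i) * V i) - ∑ i ∈ Finset.range j, F (j-i-1) * V i := by
      rw [hS1, hS2, hlast, hV0, mul_zero, zero_mul, add_zero, add_zero, ← Finset.sum_sub_distrib]
      refine Finset.sum_nonneg fun i hi => ?_
      rw [Finset.mem_range] at hi
      have hco : F (j-(i+1)) * V (i+1) - F (j-i-1) * V i = F (j-i-1) * (V (i+1) - V i) := by
        rw [show j-(i+1) = j-i-1 by omega]; ring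
      rw [hco]
      have hVi : V i ≤ V (i+1) := by
        have := hmono (i+1) (by omega) (by omega)
        simpa using this
      exact mul_nonneg (hFnn _) (by linarith)
    linarith
  linarith

include hε0 hε1 hN in
/-- Monotonicity step for the value of block size 1. -/
lemma rhs_one_mono (V : ℕ → ℝ) (hV0 : V 0 = 0) {j : ℕ} (hj : 2 ≤ j)
    (hmono : ∀ i, 1 ≤ i → i ≤ j-1 → V (i-1) ≤ V i) :
    bellmanRHS ε N V (j-1) 1 ≤ bellmanRHS ε N V j 1 := by
  rw [bellmanRHS, bellmanRHS, show j - 1 + 1 = j by omega, show j - 1 - 1 + 1 = j - 1 by omega]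
  have hrew : Rew ε N (j-1) 1 ≤ Rew ε N j 1 := by
    rw [Rew, Rew]
    have := pall_mono hε0 hε1 (N := N) (le_refl 1) (show j-1 ≤ j by omega)
    push_cast; linarith
  have hpeel : ∑ i ∈ Finset.range j, (Pall ε N 1 (j-i) - Pall ε N 1 (j-i-1)) * V i
      = (∑ i ∈ Finset.range (j-1), (Pall ε N 1 (j-(i+1)) - Pall ε N 1 (j-(i+1)-1)) * V (i+1))
        + (Pall ε N 1 j - Pall ε N 1 (j-1)) * V 0 := by
    rw [show j = (j-1)+1 by omega,
      Finset.sum_range_succ' (fun i => (Pall ε N 1 ((j-1)+1-i) - Pall ε N 1 ((j-1)+1-i-1)) * V i) (j-1)]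
    simp only [Nat.sub_zero]
    rw [show (j-1)+1 = j by omega]
  have hterm : ∀ i ∈ Finset.range (j-1),
      (Pall ε N 1 (j-1-i) - Pall ε N 1 (j-1-i-1)) * V i
        ≤ (Pall ε N 1 (j-(i+1)) - Pall ε N 1 (j-(i+1)-1)) * V (i+1) := by
    intro i hi
    rw [Finset.mem_range] at hi
    rw [show j-(i+1) = j-1-i by omega]
    have hco : 0 ≤ Pall ε N 1 (j-1-i) - Pall ε N 1 (j-1-i-1) := by
      have := pall_mono hε0 hε1 (N := N) (le_refl 1) (show j-1-i-1 ≤ j-1-i by omega)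
      linarith
    have hVi : V i ≤ V (i+1) := by
      have := hmono (i+1) (by omega) (by omega)
      simpa using this
    exact mul_le_mul_of_nonneg_left hVi hco
  have := Finset.sum_le_sum hterm
  rw [hpeel, hV0, mul_zero, add_zero]
  linarith

end cmp


/-- `V` is the optimal value function of the finite-horizon MDP (Bellman recursion with
`V 0 = 0`, and `V t` the maximum of `bellmanRHS` over `K ∈ {1,…,t}`), and `Ks t` is the
least block size in `{1,…,t}` attaining that maximum. -/
def BellmanSystem (ε : ℝ) (N : ℕ) (V : ℕ → ℝ) (Ks : ℕ → ℕ) : Prop :=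
  V 0 = 0 ∧
  (∀ t, 1 ≤ t → ∀ K ∈ Finset.Icc 1 t, bellmanRHS ε N V t K ≤ V t) ∧
  (∀ t, 1 ≤ t → Ks t ∈ Finset.Icc 1 t ∧ V t = bellmanRHS ε N V t (Ks t) ∧
    ∀ K ∈ Finset.Icc 1 t, V t = bellmanRHS ε N V t K → Ks t ≤ K)

/-- Let `0 < ε < 1`, `N ≥ 1` and `t ≥ 2`. If `R_t(1) > R_t(2)`, then
the optimal policy is plain retransmission for all remaining slots: `K*_j = 1` for
every `j ∈ {1,…,t}`. -/
theorem plain_retransmission_optimal (ε : ℝ) (hε0 : 0 < ε) (hε1 : ε < 1)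
    (N : ℕ) (hN : 1 ≤ N) (V : ℕ → ℝ) (Ks : ℕ → ℕ) (hB : BellmanSystem ε N V Ks)
    (t : ℕ) (ht : 2 ≤ t) (hR : Rew ε N t 2 < Rew ε N t 1) :
    ∀ j, 1 ≤ j → j ≤ t → Ks j = 1 := by
  obtain ⟨hV0, hUB, hKs⟩ := hB
  have hyp : 2*(q ε 2 t)^N < (q ε 1 t)^N := by
    have h2 : Rew ε N t 2 = 2 * (q ε 2 t)^N := by
      rw [Rew, pall_eq_q (by omega : 1 ≤ 2)]; push_cast; ring
    have h1 : Rew ε N t 1 = (q ε 1 t)^N := by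
      rw [Rew, pall_eq_q (le_refl 1)]; push_cast; ring
    rw [h2, h1] at hR
    exact hR
  have main : ∀ j, 1 ≤ j → j ≤ t →
      V j = bellmanRHS ε N V j 1 ∧ Ks j = 1 ∧ V (j-1) ≤ V j := by
    intro j
    induction j using Nat.strong_induction_on with
    | _ j IH =>
    intro hj1 hjt
    have hmono : ∀ i, 1 ≤ i → i ≤ j-1 → V (i-1) ≤ V i := fun i h1 h2 =>
      (IH i (by omega) h1 (by omega)).2.2
    have hcmp : ∀ K ∈ Finset.Icc 1 j, bellmanRHS ε N V j K ≤ bellmanRHS ε N V j 1 := by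
      intro K hK
      rw [Finset.mem_Icc] at hK
      rcases eq_or_lt_of_le hK.1 with h | h
      · rw [← h]
      · exact rhs_le hε0 hε1 hN hyp V hV0 h hK.2 hjt hmono
    have h1mem : (1:ℕ) ∈ Finset.Icc 1 j := Finset.mem_Icc.mpr ⟨le_refl 1, hj1⟩
    obtain ⟨hKmem, hVeq, hleast⟩ := hKs j hj1
    have hVle : V j ≤ bellmanRHS ε N V j 1 := by
      rw [hVeq]; exact hcmp (Ks j) hKmem
    have hVge : bellmanRHS ε N V j 1 ≤ V j := hUB j hj1 1 h1mem
    have hVeq1 : V j = bellmanRHS ε N V j 1 := le_antisymm hVle hVge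
    have hKs1 : Ks j = 1 := by
      have hle : Ks j ≤ 1 := hleast 1 h1mem hVeq1
      have hge : 1 ≤ Ks j := (Finset.mem_Icc.mp hKmem).1
      omega
    refine ⟨hVeq1, hKs1, ?_⟩
    rcases eq_or_lt_of_le hj1 with h | h
    · -- j = 1
      rw [← h]
      simp only [Nat.sub_self]
      rw [hV0]
      rw [← h] at hVeq1
      rw [hVeq1, bellmanRHS]
      have : ∑ i ∈ Finset.range (1 - 1 + 1), (Pall ε N 1 (1-i) - Pall ε N 1 (1-i-1)) * V i = 0 := by
        simp [hV0]
      rw [this, add_zero, Rew]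
      have := pall_nonneg hε0 hε1 (N := N) 1 1 (le_refl 1)
      push_cast
      linarith
    · -- j ≥ 2
      have hj2 : 2 ≤ j := h
      have hIH := IH (j-1) (by omega) (by omega) (by omega)
      rw [hVeq1, hIH.1]
      exact rhs_one_mono hε0 hε1 hN V hV0 hj2 hmono
  exact fun j hj1 hjt => (main j hj1 hjt).2.1
end

section
/- Fix an integer t ≥ 2. The threshold erasure probability is strictly decreasing in the number of receivers: for all integers N1, N2 with 1 ≤ N1 < N2, one has ε*(t, N2) < ε*(t, N1). -/
/-- `e` is the threshold erasure probability `ε*(t,N)`: the unique zero of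
`f(·, t, N)` in `(0,1)`, with `f < 0` below it and `f > 0` above it. -/
def IsThreshold (t N : ℕ) (e : ℝ) : Prop :=
  e ∈ Set.Ioo (0 : ℝ) 1 ∧ fThresh e t N = 0 ∧
  (∀ ε' ∈ Set.Ioo (0 : ℝ) e, fThresh ε' t N < 0) ∧
  (∀ ε' ∈ Set.Ioo e (1 : ℝ), 0 < fThresh ε' t N)

/-- Fix `t ≥ 2`. The threshold erasure probability is strictly
decreasing in the number of receivers: for `1 ≤ N1 < N2`, `ε*(t, N2) < ε*(t, N1)`. -/
theorem threshold_anti_in_N (t N1 N2 : ℕ) (ht : 2 ≤ t) (hN1 : 1 ≤ N1) (hN : N1 < N2)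
    (e1 e2 : ℝ) (he1 : IsThreshold t N1 e1) (he2 : IsThreshold t N2 e2) :
    e2 < e1 := by
  obtain ⟨⟨he1pos, he1lt⟩, hf1, _, _⟩ := he1
  obtain ⟨⟨he2pos, he2lt⟩, hf2, hneg, _⟩ := he2
  -- basic positivity facts
  have hN1pos : (0 : ℝ) < N1 := by exact_mod_cast hN1

  have hexp : (1 : ℝ) / N2 < 1 / N1 := by
    apply one_div_lt_one_div_of_lt hN1pos
    exact_mod_cast hN
  have hrpow_lt : (2 : ℝ) ^ ((1 : ℝ) / N2) < (2 : ℝ) ^ ((1 : ℝ) / N1) :=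
    Real.rpow_lt_rpow_left_iff one_lt_two |>.mpr hexp
  have hrpow1pos : (0 : ℝ) < (2 : ℝ) ^ ((1 : ℝ) / N1) := Real.rpow_pos_of_pos two_pos _
  -- 1 - e1^t > 0
  have hpow : e1 ^ t < 1 := pow_lt_one₀ he1pos.le he1lt (by omega)
  have h1 : (0 : ℝ) < 1 - e1 ^ t := by linarith
  -- the bracket g(e1) is positive
  set g : ℝ := 1 - e1 ^ t + (t : ℝ) * e1 ^ t - (t : ℝ) * e1 ^ (t - 1) with hg
  have hzero : 1 - e1 ^ t = (2 : ℝ) ^ ((1 : ℝ) / N1) * g := by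
    have := hf1
    unfold fThresh at this
    linarith
  have hgpos : 0 < g := by
    by_contra h
    push_neg at h
    nlinarith
  -- hence f(e1, t, N2) > 0
  have hkey : 0 < fThresh e1 t N2 := by
    unfold fThresh
    have : (2 : ℝ) ^ ((1 : ℝ) / N2) * g < (2 : ℝ) ^ ((1 : ℝ) / N1) * g :=
      mul_lt_mul_of_pos_right hrpow_lt hgpos
    rw [hg] at this
    linarith
  -- conclude e2 < e1
  by_contra h
  push_neg at h
  rcases eq_or_lt_of_le h with heq | hlt
  · rw [heq] at hkey
    rw [hf2] at hkey
    exact lt_irrefl 0 hkey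
  · have := hneg e1 ⟨he1pos, hlt⟩
    linarith
end

section
/- Fix an integer N ≥ 1. The threshold erasure probability is strictly increasing in the number of remaining slots: for every integer t ≥ 2, one has ε*(t, N) < ε*(t+1, N). -/
/-- Purely algebraic core: if `f(e,t)=0` (with `A = e^{t-1}`, `P = e*A = e^t`,
`T = t`), then `f(e,t+1) < 0`. -/
lemma fthresh_aux (c T e A : ℝ) (hc : 0 < c) (hT : 2 ≤ T) (he0 : 0 < e) (he1 : e < 1)
    (hA : 0 < A) (hP : e * A < 1) (hB : 1 + T * (e - 1) ≤ e * A)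
    (hzero : (1 - e * A) - c * (1 - e * A + T * (e * A) - T * A) = 0) :
    (1 - e * e * A) - c * (1 - e * e * A + (T + 1) * (e * e * A) - (T + 1) * (e * A)) < 0 := by
  have hcD : c * (1 - e * A + T * (e * A) - T * A) = 1 - e * A := by linarith
  have hD : 0 < 1 - e * A + T * (e * A) - T * A := by
    nlinarith [hcD, hP, hc]
  have h1 : e * (1 - e * A + T * (e * A) - T * A) < T * (1 - e) * (1 - e * A) := by
    nlinarith [mul_pos (sub_pos.mpr he1) (sub_pos.mpr hP)]
  have h2 : e * (1 - e * A + T * (e * A) - T * A)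
      < (c * T * (1 - e)) * (1 - e * A + T * (e * A) - T * A) := by
    calc e * (1 - e * A + T * (e * A) - T * A) < T * (1 - e) * (1 - e * A) := h1
      _ = (c * T * (1 - e)) * (1 - e * A + T * (e * A) - T * A) := by
          linear_combination (-(T * (1 - e))) * hcD
  have hkey : e < c * T * (1 - e) := lt_of_mul_lt_mul_right h2 hD.le
  have hid : (1 - e * e * A) - c * (1 - e * e * A + (T + 1) * (e * e * A) - (T + 1) * (e * A))
      = ((1 - e * A) - c * (1 - e * A + T * (e * A) - T * A))
        + A * (1 - e) * (e - c * T * (1 - e)) := by ring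
  rw [hid, hzero, zero_add]
  exact mul_neg_of_pos_of_neg (mul_pos hA (by linarith)) (by linarith)

/-- Fix `N ≥ 1`. The threshold erasure probability is strictly
increasing in the number of remaining slots: for every `t ≥ 2`, `ε*(t,N) < ε*(t+1,N)`. -/
theorem threshold_mono_in_t (N : ℕ) (hN : 1 ≤ N) (t : ℕ) (ht : 2 ≤ t)
    (e1 e2 : ℝ) (he1 : IsThreshold t N e1) (he2 : IsThreshold (t + 1) N e2) :
    e1 < e2 := by
  obtain ⟨⟨he0, he1'⟩, hze, _, _⟩ := he1
  obtain ⟨_, hz2, hneg2, hpos2⟩ := he2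
  obtain ⟨k, rfl⟩ : ∃ k, t = k + 2 := ⟨t - 2, by omega⟩
  set c : ℝ := (2 : ℝ) ^ (1 / (N : ℝ)) with hc
  have hcpos : 0 < c := Real.rpow_pos_of_pos (by norm_num) _
  set e := e1 with he_def
  set A : ℝ := e ^ (k + 1) with hAdef
  have hA : 0 < A := pow_pos he0 _
  have hpow2 : e ^ (k + 2) = e * A := by rw [hAdef]; ring
  have hpow3 : e ^ (k + 3) = e * e * A := by rw [hAdef]; ring
  have hP : e * A < 1 := by
    rw [← hpow2]; exact pow_lt_one₀ he0.le he1' (by omega)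
  have hB : 1 + ((k : ℝ) + 2) * (e - 1) ≤ e * A := by
    have h := one_add_mul_le_pow (a := e - 1) (by linarith) (k + 2)
    rw [← hpow2]
    calc 1 + ((k : ℝ) + 2) * (e - 1) = 1 + ((k + 2 : ℕ) : ℝ) * (e - 1) := by push_cast; ring
      _ ≤ (1 + (e - 1)) ^ (k + 2) := h
      _ = e ^ (k + 2) := by ring_nf
  have hzero : (1 - e * A) - c * (1 - e * A + ((k : ℝ) + 2) * (e * A) - ((k : ℝ) + 2) * A) = 0 := by
    have h0 := hze
    simp only [fThresh, ← hc, show k + 2 - 1 = k + 1 from rfl] at h0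
    push_cast at h0
    rw [hpow2] at h0
    linarith
  have hmain := fthresh_aux c ((k : ℝ) + 2) e A hcpos (by linarith [Nat.cast_nonneg (α := ℝ) k])
    he0 he1' hA hP hB hzero
  have hneg : fThresh e (k + 3) N < 0 := by
    simp only [fThresh, ← hc, show k + 3 - 1 = k + 2 from rfl]
    push_cast
    rw [hpow3, hpow2]
    calc (1 - e * e * A) - c * (1 - e * e * A + ((k : ℝ) + 3) * (e * e * A) - ((k : ℝ) + 3) * (e * A))
        = (1 - e * e * A) - c * (1 - e * e * A + (((k : ℝ) + 2) + 1) * (e * e * A)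
          - (((k : ℝ) + 2) + 1) * (e * A)) := by ring
      _ < 0 := hmain
  by_contra hle
  push_neg at hle
  rcases lt_or_eq_of_le hle with hlt | heq
  · have := hpos2 e1 ⟨hlt, he1'⟩
    rw [show (k + 2) + 1 = k + 3 from rfl] at this
    linarith
  · rw [heq, show (k + 2) + 1 = k + 3 from rfl] at hz2
    linarith
end

section
/- For every erasure probability ε with 0 < ε < 1 and every integer N ≥ 1, the optimal block sizes in the last two slots before the deadline equal one: K*_1 = 1 and K*_2 = 1. -/
/-- For `0 < ε < 1` and `N ≥ 1`, the optimal block sizes in the last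
two slots before the deadline equal one: `K*_1 = 1` and `K*_2 = 1`. -/
theorem optimal_last_two_slots (ε : ℝ) (hε0 : 0 < ε) (hε1 : ε < 1) (N : ℕ) (hN : 1 ≤ N)
    (V : ℕ → ℝ) (Ks : ℕ → ℕ) (hB : BellmanSystem ε N V Ks) :
    Ks 1 = 1 ∧ Ks 2 = 1 := by
  obtain ⟨hV0, hmax, hKs⟩ := hB
  have h1 := hKs 1 (le_refl 1)
  have hKs1 : Ks 1 = 1 := by
    have := h1.1
    simp [Finset.mem_Icc] at this
    omega
  -- Phat computations
  have hP10 : Phat ε 1 0 = 0 := by simp [Phat]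
  have hP11 : Phat ε 1 1 = 1 - ε := by simp [Phat]
  have hP12 : Phat ε 1 2 = (1 - ε) * (1 + ε) := by
    have : Finset.Icc 1 2 = ({1, 2} : Finset ℕ) := by decide
    simp [Phat, this]; ring
  have hP22 : Phat ε 2 2 = (1 - ε) ^ 2 := by
    have : Finset.Icc 2 2 = ({2} : Finset ℕ) := by decide
    simp [Phat, this]
  -- V 1
  have hV1 : V 1 = (1 - ε) ^ N := by
    have h := h1.2.1
    rw [hKs1] at h
    rw [h]
    simp [bellmanRHS, Rew, Pall, hV0, hP11]
  -- key inequality: RHS(2,2) ≤ RHS(2,1)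
  have hkey : bellmanRHS ε N V 2 2 ≤ bellmanRHS ε N V 2 1 := by
    have e2 : bellmanRHS ε N V 2 2 = 2 * ((1 - ε) ^ 2) ^ N := by
      simp [bellmanRHS, Rew, Pall, hV0, hP22]
    have e1 : bellmanRHS ε N V 2 1 =
        ((1 - ε) * (1 + ε)) ^ N + (1 - ε) ^ N * (1 - ε) ^ N := by
      have hsum : Finset.range 2 = ({0, 1} : Finset ℕ) := by decide
      have hN0 : N ≠ 0 := by omega
      simp [bellmanRHS, Rew, Pall, hV0, hV1, hsum, hP10, hP11, hP12,
        zero_pow hN0]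
    have hsq : ((1 - ε) ^ 2) ^ N = (1 - ε) ^ N * (1 - ε) ^ N := by
      rw [← pow_mul, two_mul, pow_add]
    have hpow : ((1 - ε) ^ 2) ^ N ≤ ((1 - ε) * (1 + ε)) ^ N := by
      apply pow_le_pow_left₀ (sq_nonneg _)
      nlinarith
    rw [e1, e2, hsq] at *
    linarith
  refine ⟨hKs1, ?_⟩
  obtain ⟨hmem2, heq2, hmin2⟩ := hKs 2 (by norm_num)
  have hle : bellmanRHS ε N V 2 1 ≤ V 2 := hmax 2 (by norm_num) 1 (by simp)
  have hKs2mem : Ks 2 = 1 ∨ Ks 2 = 2 := by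
    simp [Finset.mem_Icc] at hmem2; omega
  rcases hKs2mem with h | h
  · exact h
  · rw [h] at heq2
    have hVeq : V 2 = bellmanRHS ε N V 2 1 := le_antisymm (heq2 ▸ hkey) hle
    have := hmin2 1 (by simp) hVeq
    omega
end

section
/- Suppose there is a single receiver, i.e., N = 1. Then for every erasure probability ε with 0 < ε < 1 and every integer t ≥ 1, the optimal block size is K*_t = 1; that is, plain retransmission is optimal in every slot. -/
section Aux
open Finset

noncomputable def Bin (ε : ℝ) (K t : ℕ) : ℝ :=
  ∑ s ∈ Finset.Icc K t, (t.choose s : ℝ) * (1 - ε) ^ s * ε ^ (t - s)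

noncomputable def MBin (ε : ℝ) (K t : ℕ) : ℝ :=
  ∑ s ∈ Finset.Icc K t, (s : ℝ) * (t.choose s : ℝ) * (1 - ε) ^ s * ε ^ (t - s)

lemma sum_choose_split (p q : ℝ) (f : ℕ → ℝ) (K t : ℕ) (hK : 1 ≤ K) :
    ∑ s ∈ Icc K (t+1), ((t+1).choose s : ℝ) * f s * p ^ s * q ^ (t+1-s)
      = q * ∑ s ∈ Icc K t, (t.choose s : ℝ) * f s * p ^ s * q ^ (t-s)
        + p * ∑ r ∈ Icc (K-1) t, (t.choose r : ℝ) * f (r+1) * p ^ r * q ^ (t-r) := by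
  obtain ⟨K', rfl⟩ : ∃ K', K = K' + 1 := ⟨K - 1, by omega⟩
  have h1 : ∑ s ∈ Icc (K'+1) (t+1), ((t+1).choose s : ℝ) * f s * p ^ s * q ^ (t+1-s)
      = ∑ s ∈ Icc (K'+1) (t+1), ((t.choose s : ℝ) * f s * p ^ s * q ^ (t+1-s)
          + (t.choose (s-1) : ℝ) * f s * p ^ s * q ^ (t+1-s)) := by
    refine sum_congr rfl fun s hs => ?_
    simp only [mem_Icc] at hs
    have hs1 : 1 ≤ s := by omega
    have hc : (t+1).choose s = t.choose (s-1) + t.choose s := by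
      conv_lhs => rw [show s = (s-1)+1 by omega]
      rw [Nat.choose_succ_succ']
      congr 1 <;> congr 1 <;> omega
    rw [hc]; push_cast; ring
  rw [h1, Finset.sum_add_distrib]
  congr 1
  · rw [Finset.mul_sum]
    rw [← Finset.sum_subset (Finset.Icc_subset_Icc_right (Nat.le_succ t))
        (fun s hs hns => ?_)]
    · refine sum_congr rfl fun s hs => ?_
      simp only [mem_Icc] at hs
      rw [show t+1-s = (t-s)+1 by omega, pow_succ]
      ring
    · simp only [mem_Icc] at hs hns
      have : t < s := by omega
      simp [Nat.choose_eq_zero_of_lt this]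
  · have hmap : Icc (K'+1) (t+1)
        = (Icc K' t).map ⟨fun x => x + 1, add_left_injective 1⟩ := by
      ext x
      simp only [mem_Icc, Finset.mem_map, Function.Embedding.coeFn_mk]
      constructor
      · rintro ⟨h1, h2⟩; exact ⟨x - 1, by omega, by omega⟩
      · rintro ⟨a, ⟨ha1, ha2⟩, rfl⟩; omega
    rw [hmap, Finset.sum_map, Finset.mul_sum]
    refine sum_congr rfl fun r hr => ?_
    simp only [mem_Icc] at hr
    simp only [Function.Embedding.coeFn_mk, Nat.add_sub_cancel]
    rw [show t+1-(r+1) = t-r by omega, pow_succ]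
    ring

lemma Icc_pred_insert {K t : ℕ} (hK : 1 ≤ K) (hKt : K ≤ t + 1) :
    Icc (K-1) t = insert (K-1) (Icc K t) := by
  ext x
  simp only [mem_Icc, Finset.mem_insert]
  omega

lemma Phat_eq_Bin (ε : ℝ) (K : ℕ) (hK : 1 ≤ K) : ∀ t, Phat ε K t = Bin ε K t := by
  intro t
  induction t with
  | zero =>
      have : ¬ (K ≤ 0) := by omega
      simp [Phat, Bin, Finset.Icc_eq_empty this]
  | succ t ih =>
      by_cases hKt : K ≤ t + 1
      · have hrec : Phat ε K (t+1)
            = Phat ε K t + (t.choose (K-1) : ℝ) * ε ^ (t+1-K) * (1-ε) ^ K := by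
          rw [Phat, Finset.sum_Icc_succ_top hKt, ← Phat]
          norm_num
        rw [hrec, ih]
        have hBin : Bin ε K (t+1)
            = ε * Bin ε K t + (1-ε) * ((t.choose (K-1) : ℝ) * 1 * (1-ε)^(K-1) * ε^(t-(K-1))
                + ∑ s ∈ Icc K t, (t.choose s : ℝ) * 1 * (1-ε)^s * ε^(t-s)) := by
          rw [Bin]
          have := sum_choose_split (1-ε) ε (fun _ => 1) K t hK
          simp only [mul_one] at this ⊢
          rw [this, Icc_pred_insert hK hKt, Finset.sum_insert (by simp; omega)]
          simp [Bin]
        rw [hBin]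
        have hB : ∑ s ∈ Icc K t, (t.choose s : ℝ) * 1 * (1-ε)^s * ε^(t-s) = Bin ε K t := by
          simp [Bin]
        rw [hB]
        rw [show (1-ε)^K = (1-ε) * (1-ε)^(K-1) by
          conv_lhs => rw [show K = (K-1)+1 by omega]
          rw [pow_succ]; ring]
        rw [show t+1-K = t-(K-1) by omega]
        ring
      · have h1 : ¬ (K ≤ t) := by omega
        simp [Phat, Bin, Finset.Icc_eq_empty hKt]

lemma Bin_succ (ε : ℝ) {K t : ℕ} (hK : 1 ≤ K) (hKt : K ≤ t + 1) :
    Bin ε K (t+1) = Bin ε K t + (t.choose (K-1) : ℝ) * ε ^ (t+1-K) * (1-ε) ^ K := by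
  rw [← Phat_eq_Bin ε K hK, ← Phat_eq_Bin ε K hK]
  rw [Phat, Finset.sum_Icc_succ_top hKt, ← Phat]
  norm_num

lemma MBin_succ (ε : ℝ) {K t : ℕ} (hK : 1 ≤ K) (hKt : K ≤ t + 1) :
    MBin ε K (t+1) = MBin ε K t
      + (K : ℝ) * (t.choose (K-1) : ℝ) * ε ^ (t+1-K) * (1-ε) ^ K
      + (1-ε) * Bin ε K t := by
  have h := sum_choose_split (1-ε) ε (fun s => (s : ℝ)) K t hK
  have hL : MBin ε K (t+1)
      = ∑ s ∈ Icc K (t+1), ((t+1).choose s : ℝ) * (s:ℝ) * (1-ε)^s * ε^(t+1-s) := by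
    rw [MBin]; exact sum_congr rfl fun s hs => by ring
  have hM : ∑ s ∈ Icc K t, (t.choose s : ℝ) * (s:ℝ) * (1-ε)^s * ε^(t-s) = MBin ε K t := by
    rw [MBin]; exact sum_congr rfl fun s hs => by ring
  rw [hL, h, Icc_pred_insert hK hKt, Finset.sum_insert (by simp; omega)]
  have hsplit : ∑ r ∈ Icc K t, (t.choose r : ℝ) * ((r:ℝ)+1) * (1-ε)^r * ε^(t-r)
      = MBin ε K t + Bin ε K t := by
    rw [MBin, Bin, ← Finset.sum_add_distrib]
    exact sum_congr rfl fun s hs => by ring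
  push_cast
  rw [hsplit, hM]
  rw [show (1-ε)^K = (1-ε) * (1-ε)^(K-1) by
    conv_lhs => rw [show K = (K-1)+1 by omega]
    rw [pow_succ]; ring]
  rw [show t+1-K = t-(K-1) by omega]
  have hcast : ((K-1 : ℕ) : ℝ) = (K:ℝ) - 1 := by
    have : (K:ℝ) = ((K-1 : ℕ) : ℝ) + 1 := by
      rw [show K = (K-1)+1 by omega]; push_cast; ring
    linarith
  rw [hcast]
  ring

lemma star (ε : ℝ) (K : ℕ) (hK : 1 ≤ K) :
    ∀ t, (K : ℝ) * Bin ε K t + (1-ε) * ∑ T ∈ range t, Bin ε K T = MBin ε K t := by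
  intro t
  induction t with
  | zero =>
      have : ¬ (K ≤ 0) := by omega
      simp [Bin, MBin, Finset.Icc_eq_empty this]
  | succ t ih =>
      by_cases hKt : K ≤ t + 1
      · rw [Bin_succ ε hK hKt, MBin_succ ε hK hKt, Finset.sum_range_succ]
        rw [← ih]
        ring
      · have hz : ∀ T, T ≤ t + 1 → Bin ε K T = 0 := fun T hT => by
          have : ¬ (K ≤ T) := by omega
          simp [Bin, Finset.Icc_eq_empty this]
        have : ¬ (K ≤ t + 1) := hKt
        rw [MBin, Finset.Icc_eq_empty this, Finset.sum_empty,
          hz (t+1) le_rfl, Finset.sum_eq_zero (fun T hT => hz T (by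
            simp only [Finset.mem_range] at hT; omega))]
        ring

lemma binom_mean (ε : ℝ) (t : ℕ) :
    MBin ε 1 t = (1-ε) * t := by
  have hIcc : MBin ε 1 t = ∑ s ∈ range (t+1), (s:ℝ) * (t.choose s : ℝ) * (1-ε)^s * ε^(t-s) := by
    rw [MBin]
    apply Finset.sum_subset
    · intro x hx; simp only [mem_Icc] at hx; simp only [Finset.mem_range]; omega
    · intro x hx hnx
      simp only [Finset.mem_range] at hx
      simp only [mem_Icc] at hnx
      have : x = 0 := by omega
      simp [this]
  rw [hIcc]
  cases t with
  | zero => simp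
  | succ t =>
      rw [Finset.sum_range_succ']
      have key : ∀ i ∈ range (t+1),
          (((i+1):ℕ):ℝ) * (((t+1).choose (i+1)):ℝ) * (1-ε)^(i+1) * ε^(t+1-(i+1))
            = ((t:ℝ)+1) * (1-ε) * ((1-ε)^i * ε^(t-i) * (t.choose i : ℝ)) := by
        intro i hi
        have h1 : (t+1) * t.choose i = (t+1).choose (i+1) * (i+1) :=
          Nat.add_one_mul_choose_eq t i
        have h2 : ((t:ℝ)+1) * (t.choose i : ℝ)
            = ((t+1).choose (i+1) : ℝ) * ((i:ℝ)+1) := by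
          have := congrArg (Nat.cast (R := ℝ)) h1
          push_cast at this
          linarith
        rw [show t+1-(i+1) = t-i by omega, pow_succ]
        push_cast
        linear_combination (-((1-ε)^i*(1-ε)*ε^(t-i))) * h2
      rw [Finset.sum_congr rfl key]
      rw [← Finset.mul_sum]
      have hadd : ∑ i ∈ range (t+1), (1-ε)^i * ε^(t-i) * (t.choose i : ℝ) = 1 := by
        have := add_pow (1-ε) ε t
        simp only [sub_add_cancel, one_pow] at this
        rw [← this]
      rw [hadd]
      push_cast
      ring

lemma MBin_le (ε : ℝ) (hε0 : 0 ≤ ε) (hε1 : ε ≤ 1) (K t : ℕ) (hK : 1 ≤ K) :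
    MBin ε K t ≤ MBin ε 1 t := by
  apply Finset.sum_le_sum_of_subset_of_nonneg
  · apply Finset.Icc_subset_Icc_left hK
  · intro s hs hns
    have h1 : (0:ℝ) ≤ 1 - ε := by linarith
    positivity

lemma abel_sum (a : ℕ → ℝ) : ∀ m : ℕ,
    ∑ j ∈ Finset.range (m+1), (a j - a (j+1)) * (j:ℝ)
      = (∑ j ∈ Finset.Icc 1 m, a j) - (m:ℝ) * a (m+1) := by
  intro m
  induction m with
  | zero => simp
  | succ m ih =>
      rw [Finset.sum_range_succ, ih, Finset.sum_Icc_succ_top (by omega : 1 ≤ m+1)]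
      push_cast
      ring

lemma rhs_eq (ε : ℝ) (V : ℕ → ℝ) (t K : ℕ) (hK : 1 ≤ K) (hKt : K ≤ t)
    (hV : ∀ j, j < t → V j = (1-ε) * j) :
    bellmanRHS ε 1 V t K
      = (K:ℝ) * Phat ε K t + (1-ε) * ∑ T ∈ Finset.Icc K (t-1), Phat ε K T := by
  rw [bellmanRHS, Rew]
  simp only [Pall, pow_one]
  congr 1
  have hterm : ∀ j ∈ Finset.range (t-K+1),
      (Phat ε K (t-j) - Phat ε K (t-j-1)) * V j
        = (1-ε) * ((Phat ε K (t-j) - Phat ε K (t-(j+1))) * (j:ℝ)) := by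
    intro j hj
    simp only [Finset.mem_range] at hj
    rw [hV j (by omega), show t-j-1 = t-(j+1) from Nat.sub_sub t j 1]
    ring
  rw [Finset.sum_congr rfl hterm, ← Finset.mul_sum]
  congr 1
  have := abel_sum (fun j => Phat ε K (t-j)) (t-K)
  rw [this]
  have hzero : Phat ε K (t-(t-K+1)) = 0 := by
    have : t-(t-K+1) = K-1 := by omega
    rw [this, Phat, Finset.Icc_eq_empty (by omega), Finset.sum_empty]
  rw [hzero, mul_zero, sub_zero]
  -- reindex  ∑ j ∈ Icc 1 (t-K), Phat ε K (t-j) = ∑ T ∈ Icc K (t-1), Phat ε K T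
  apply Finset.sum_nbij' (fun j => t - j) (fun T => t - T)
  · intro j hj; simp only [Finset.mem_Icc] at hj ⊢; omega
  · intro T hT; simp only [Finset.mem_Icc] at hT ⊢; omega
  · intro j hj; simp only [Finset.mem_Icc] at hj; omega
  · intro T hT; simp only [Finset.mem_Icc] at hT; omega
  · intro j hj; rfl

lemma sum_Icc_Bin_eq (ε : ℝ) (K t : ℕ) (hK : 1 ≤ K) :
    ∑ T ∈ Finset.Icc K (t-1), Bin ε K T = ∑ T ∈ Finset.range t, Bin ε K T := by
  apply Finset.sum_subset
  · intro T hT; simp only [Finset.mem_Icc] at hT; simp only [Finset.mem_range]; omega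
  · intro T hT hnT
    simp only [Finset.mem_range] at hT
    simp only [Finset.mem_Icc] at hnT
    have : ¬ (K ≤ T) := by omega
    rw [Bin, Finset.Icc_eq_empty this, Finset.sum_empty]

lemma rhs_val (ε : ℝ) (V : ℕ → ℝ) (t K : ℕ) (hK : 1 ≤ K) (hKt : K ≤ t)
    (hV : ∀ j, j < t → V j = (1-ε) * j) :
    bellmanRHS ε 1 V t K = MBin ε K t := by
  rw [rhs_eq ε V t K hK hKt hV]
  have h1 : ∀ T, Phat ε K T = Bin ε K T := Phat_eq_Bin ε K hK
  simp only [h1]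
  rw [sum_Icc_Bin_eq ε K t hK, star ε K hK t]

lemma V_val (ε : ℝ) (hε0 : 0 < ε) (hε1 : ε < 1) (V : ℕ → ℝ) (Ks : ℕ → ℕ)
    (hB : BellmanSystem ε 1 V Ks) : ∀ t, V t = (1-ε) * t := by
  intro t
  induction t using Nat.strong_induction_on with
  | _ t ih =>
      rcases Nat.eq_zero_or_pos t with rfl | ht
      · simp [hB.1]
      · obtain ⟨hmem, hVt, _⟩ := hB.2.2 t ht
        simp only [Finset.mem_Icc] at hmem
        have hV : ∀ j, j < t → V j = (1-ε) * j := fun j hj => ih j hj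
        have hup : V t ≤ (1-ε) * t := by
          rw [hVt, rhs_val ε V t (Ks t) hmem.1 hmem.2 hV]
          calc MBin ε (Ks t) t ≤ MBin ε 1 t :=
                MBin_le ε hε0.le hε1.le (Ks t) t hmem.1
            _ = (1-ε) * t := binom_mean ε t
        have hlow : (1-ε) * t ≤ V t := by
          have h1 := hB.2.1 t ht 1 (by simp only [Finset.mem_Icc]; omega)
          rw [rhs_val ε V t 1 le_rfl ht hV, binom_mean ε t] at h1
          exact h1
        linarith

end Aux

/-- With a single receiver (`N = 1`), for every `0 < ε < 1` and every
`t ≥ 1`, the optimal block size is `K*_t = 1`: plain retransmission is optimal in every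
slot. -/
theorem single_receiver_plain_optimal (ε : ℝ) (hε0 : 0 < ε) (hε1 : ε < 1)
    (V : ℕ → ℝ) (Ks : ℕ → ℕ) (hB : BellmanSystem ε 1 V Ks)
    (t : ℕ) (ht : 1 ≤ t) :
    Ks t = 1 := by
  obtain ⟨hmem, _, hmin⟩ := hB.2.2 t ht
  simp only [Finset.mem_Icc] at hmem
  have hV : ∀ j, j < t → V j = (1-ε) * j := fun j hj => V_val ε hε0 hε1 V Ks hB j
  have h1 : V t = bellmanRHS ε 1 V t 1 := by
    rw [rhs_val ε V t 1 le_rfl ht hV, binom_mean ε t, V_val ε hε0 hε1 V Ks hB t]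
  have := hmin 1 (by simp only [Finset.mem_Icc]; omega) h1
  omega
end
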